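/- arXiv:1707.09278 — 10 statements merged into one kernel-verified Lean document; each statement's English description precedes it below -/
import Mathlib

section
/- Let q ∈ [0,2] ∪ [3,∞) with q ≠ 1, let α ∈ [0,1], and let p ∈ [0,1]. Then t_q(αp + (1-α)(1-p)) ≥ 4 · ((α^q + (1-α)^q - 2^{1-q})/(α^q + (1-α)^q + q - 2)) · p(1-p) · (1 - t_q(α)) + t_q(α). -/
open Real Set

/-- Tsallis point entropy `t_q(x) = (1 - x^q - (1-x)^q)/(q-1)` (real powers). -/
noncomputable def tq (q x : ℝ) : ℝ := (1 - x ^ q - (1 - x) ^ q) / (q - 1)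

noncomputable def gg (q y : ℝ) : ℝ := (1/2 + y) ^ q + (1/2 - y) ^ q
noncomputable def g1 (q y : ℝ) : ℝ := q * ((1/2 + y) ^ (q-1) - (1/2 - y) ^ (q-1))
noncomputable def g2 (q y : ℝ) : ℝ := q * (q-1) * ((1/2 + y) ^ (q-2) + (1/2 - y) ^ (q-2))
noncomputable def g3 (q y : ℝ) : ℝ := q * (q-1) * (q-2) * ((1/2 + y) ^ (q-3) - (1/2 - y) ^ (q-3))

lemma hd_base_add (e : ℝ) {y : ℝ} (h : (1:ℝ)/2 + y ≠ 0) :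
    HasDerivAt (fun t : ℝ => (1/2 + t) ^ e) (e * (1/2 + y) ^ (e-1)) y := by
  have h1 : HasDerivAt (fun t : ℝ => 1/2 + t) 1 y := (hasDerivAt_id y).const_add _
  have := (Real.hasDerivAt_rpow_const (p := e) (Or.inl h)).comp y h1
  simpa [Function.comp_def] using this

lemma hd_base_sub (e : ℝ) {y : ℝ} (h : (1:ℝ)/2 - y ≠ 0) :
    HasDerivAt (fun t : ℝ => (1/2 - t) ^ e) (-(e * (1/2 - y) ^ (e-1))) y := by
  have h1 : HasDerivAt (fun t : ℝ => 1/2 - t) (-1) y := (hasDerivAt_id y).const_sub _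
  have := (Real.hasDerivAt_rpow_const (p := e) (Or.inl h)).comp y h1
  simpa [Function.comp_def] using this

lemma hd_gg {q y : ℝ} (h1 : (1:ℝ)/2 + y ≠ 0) (h2 : (1:ℝ)/2 - y ≠ 0) :
    HasDerivAt (gg q) (g1 q y) y := by
  have := (hd_base_add q h1).add (hd_base_sub q h2)
  refine this.congr_deriv ?_
  unfold g1; ring

lemma hd_g1 {q y : ℝ} (h1 : (1:ℝ)/2 + y ≠ 0) (h2 : (1:ℝ)/2 - y ≠ 0) :
    HasDerivAt (g1 q) (g2 q y) y := by
  have := ((hd_base_add (q-1) h1).sub (hd_base_sub (q-1) h2)).const_mul q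
  refine this.congr_deriv ?_
  unfold g2
  rw [show q - 1 - 1 = q - 2 by ring]
  ring

lemma hd_g2 {q y : ℝ} (h1 : (1:ℝ)/2 + y ≠ 0) (h2 : (1:ℝ)/2 - y ≠ 0) :
    HasDerivAt (g2 q) (g3 q y) y := by
  have := ((hd_base_add (q-2) h1).add (hd_base_sub (q-2) h2)).const_mul (q*(q-1))
  refine this.congr_deriv ?_
  unfold g3
  rw [show q - 2 - 1 = q - 3 by ring]
  ring

lemma sgn_rpow_sub {A B e : ℝ} (hB : 0 < B) (hBA : B ≤ A) :
    0 ≤ e * (A ^ e - B ^ e) := by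
  rcases lt_trichotomy e 0 with he | he | he
  · have h := Real.rpow_le_rpow_of_nonpos hB hBA he.le
    nlinarith
  · simp [he]
  · have h := Real.rpow_le_rpow hB.le hBA he.le
    nlinarith

lemma q2delta {q A B : ℝ} (hq23 : 0 ≤ (q-2)*(q-3)) (hB : 0 < B) (hBA : B ≤ A) :
    0 ≤ (q-2) * (A ^ (q-3) - B ^ (q-3)) := by
  have h := sgn_rpow_sub (e := q-3) hB hBA
  rcases lt_trichotomy q 3 with h3 | h3 | h3
  · have hΔ : A ^ (q-3) - B ^ (q-3) ≤ 0 := by nlinarith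
    have h2 : q - 2 ≤ 0 := by nlinarith
    nlinarith
  · subst h3
    norm_num
  · have hΔ : 0 ≤ A ^ (q-3) - B ^ (q-3) := by nlinarith
    nlinarith

lemma bases_ne {y y0 : ℝ} (hy : y ∈ Icc (0:ℝ) y0) (hy0 : y0 < 1/2) :
    (1:ℝ)/2 + y ≠ 0 ∧ (1:ℝ)/2 - y ≠ 0 := by
  constructor <;> [skip; skip] <;>
  · have := hy.1; have := hy.2; intro h; nlinarith

lemma Jsign {q : ℝ} (hq0 : 0 < q) (hq1 : q ≠ 1) (hq23 : 0 ≤ (q-2)*(q-3))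
    {y : ℝ} (hy : y ∈ Ioo (0:ℝ) (1/2)) :
    0 ≤ (y * g2 q y - g1 q y) / (q - 1) := by
  have hq1' : q - 1 ≠ 0 := sub_ne_zero.mpr hq1
  set J : ℝ → ℝ := fun t => (t * g2 q t - g1 q t) / (q - 1) with hJdef
  have hdJ : ∀ t ∈ Icc (0:ℝ) y, HasDerivAt J (t * g3 q t / (q-1)) t := by
    intro t ht
    obtain ⟨h1, h2⟩ := bases_ne ht hy.2
    have := (((hasDerivAt_id t).mul (hd_g2 (q := q) h1 h2)).sub (hd_g1 (q := q) h1 h2)).div_const (q-1)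
    refine this.congr_deriv ?_
    simp only [id_eq, one_mul]
    ring
  have hmono : MonotoneOn J (Icc (0:ℝ) y) := by
    apply monotoneOn_of_deriv_nonneg (convex_Icc _ _)
    · exact fun t ht => (hdJ t ht).continuousAt.continuousWithinAt
    · intro t ht
      rw [interior_Icc] at ht
      exact ((hdJ t ⟨ht.1.le, ht.2.le⟩).differentiableAt).differentiableWithinAt
    · intro t ht
      rw [interior_Icc] at ht
      rw [(hdJ t ⟨ht.1.le, ht.2.le⟩).deriv]
      have ht12 : t < 1/2 := ht.2.trans hy.2
      have hB : (0:ℝ) < 1/2 - t := by linarith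
      have hBA : (1:ℝ)/2 - t ≤ 1/2 + t := by linarith [ht.1]
      have hΔ := q2delta (A := 1/2 + t) (B := 1/2 - t) hq23 hB hBA
      have heq : t * g3 q t / (q-1) = t * (q * ((q-2) * ((1/2+t)^(q-3) - (1/2-t)^(q-3)))) := by
        unfold g3; field_simp
      rw [heq]
      exact mul_nonneg ht.1.le (mul_nonneg hq0.le hΔ)
  have hJ0 : J 0 = 0 := by
    simp [hJdef, g1]
  have := hmono (left_mem_Icc.mpr hy.1.le) (right_mem_Icc.mpr hy.1.le) hy.1.le
  rw [hJ0] at this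
  exact this

lemma Dsign {q : ℝ} (hq0 : 0 < q) (hq1 : q ≠ 1) (hq23 : 0 ≤ (q-2)*(q-3))
    {y : ℝ} (hy : y ∈ Ioo (0:ℝ) (1/2)) :
    0 ≤ (y * g1 q y - 2 * (gg q y - gg q 0)) / (q - 1) := by
  have hq1' : q - 1 ≠ 0 := sub_ne_zero.mpr hq1
  set D : ℝ → ℝ := fun t => (t * g1 q t - 2 * (gg q t - gg q 0)) / (q - 1) with hDdef
  have hdD : ∀ t ∈ Icc (0:ℝ) y, HasDerivAt D ((t * g2 q t - g1 q t) / (q-1)) t := by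
    intro t ht
    have h1 : (1:ℝ)/2 + t ≠ 0 := by intro h; nlinarith [ht.1, ht.2, hy.2]
    have h2 : (1:ℝ)/2 - t ≠ 0 := by intro h; nlinarith [ht.1, ht.2, hy.2]
    have := (((hasDerivAt_id t).mul (hd_g1 (q := q) h1 h2)).sub
      (((hd_gg (q := q) h1 h2).sub_const (gg q 0)).const_mul 2)).div_const (q-1)
    refine this.congr_deriv ?_
    simp only [id_eq, one_mul]
    ring
  have hmono : MonotoneOn D (Icc (0:ℝ) y) := by
    apply monotoneOn_of_deriv_nonneg (convex_Icc _ _)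
    · exact fun t ht => (hdD t ht).continuousAt.continuousWithinAt
    · intro t ht
      rw [interior_Icc] at ht
      exact ((hdD t ⟨ht.1.le, ht.2.le⟩).differentiableAt).differentiableWithinAt
    · intro t ht
      rw [interior_Icc] at ht
      rw [(hdD t ⟨ht.1.le, ht.2.le⟩).deriv]
      exact Jsign hq0 hq1 hq23 ⟨ht.1, ht.2.trans hy.2⟩
  have hD0 : D 0 = 0 := by simp [hDdef]
  have := hmono (left_mem_Icc.mpr hy.1.le) (right_mem_Icc.mpr hy.1.le) hy.1.le
  rw [hD0] at this
  exact this

lemma cont_gg {q : ℝ} (hq0 : 0 ≤ q) : Continuous (gg q) := by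
  unfold gg
  exact ((Real.continuous_rpow_const hq0).comp (continuous_const.add continuous_id)).add
    ((Real.continuous_rpow_const hq0).comp (continuous_const.sub continuous_id))

/-- Φ is nonnegative on [0, 1/2]. -/
lemma phi_nonneg {q : ℝ} (hq0 : 0 < q) (hq1 : q ≠ 1)
    {a : ℝ} (ha : a ∈ Icc (0:ℝ) (1/2)) :
    0 ≤ (gg q a - gg q 0) / (q - 1) := by
  have hq1' : q - 1 ≠ 0 := sub_ne_zero.mpr hq1
  set P : ℝ → ℝ := fun t => (gg q t - gg q 0) / (q - 1) with hPdef
  have hmono : MonotoneOn P (Icc (0:ℝ) (1/2)) := by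
    apply monotoneOn_of_deriv_nonneg (convex_Icc _ _)
    · exact (((cont_gg hq0.le).sub continuous_const).div_const _).continuousOn
    · intro t ht
      rw [interior_Icc] at ht
      have h1 : (1:ℝ)/2 + t ≠ 0 := by intro h; nlinarith [ht.1, ht.2]
      have h2 : (1:ℝ)/2 - t ≠ 0 := by intro h; nlinarith [ht.1, ht.2]
      exact (((hd_gg (q := q) h1 h2).sub_const (gg q 0)).div_const
        (q-1)).differentiableAt.differentiableWithinAt
    · intro t ht
      rw [interior_Icc] at ht
      have h1 : (1:ℝ)/2 + t ≠ 0 := by intro h; nlinarith [ht.1, ht.2]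
      have h2 : (1:ℝ)/2 - t ≠ 0 := by intro h; nlinarith [ht.1, ht.2]
      rw [(((hd_gg (q := q) h1 h2).sub_const (gg q 0)).div_const (q-1)).deriv]
      have hB : (0:ℝ) < 1/2 - t := by linarith [ht.2]
      have hBA : (1:ℝ)/2 - t ≤ 1/2 + t := by linarith [ht.1]
      have hs := sgn_rpow_sub (e := q - 1) hB hBA
      have heq : g1 q t / (q - 1) =
          q * ((q-1) * ((1/2+t)^(q-1) - (1/2-t)^(q-1))) / (q-1)^2 := by
        unfold g1; field_simp
      rw [heq]
      positivity
  have hP0 : P 0 = 0 := by simp [hPdef]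
  have := hmono (left_mem_Icc.mpr (by norm_num)) ha ha.1
  rw [hP0] at this
  exact this

/-- Monotonicity of Φ(y)/y². -/
lemma r_mono {q : ℝ} (hq0 : 0 < q) (hq1 : q ≠ 1) (hq23 : 0 ≤ (q-2)*(q-3)) :
    MonotoneOn (fun y => (gg q y - gg q 0) / (q - 1) / y^2) (Ioc (0:ℝ) (1/2)) := by
  have hq1' : q - 1 ≠ 0 := sub_ne_zero.mpr hq1
  apply monotoneOn_of_deriv_nonneg (convex_Ioc _ _)
  · apply ContinuousOn.div
    · exact (((cont_gg hq0.le).sub continuous_const).div_const _).continuousOn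
    · exact (continuous_pow 2).continuousOn
    · exact fun y hy => pow_ne_zero _ (ne_of_gt hy.1)
  · intro t ht
    rw [interior_Ioc] at ht
    have h1 : (1:ℝ)/2 + t ≠ 0 := by intro h; nlinarith [ht.1, ht.2]
    have h2 : (1:ℝ)/2 - t ≠ 0 := by intro h; nlinarith [ht.1, ht.2]
    exact ((((hd_gg (q := q) h1 h2).sub_const (gg q 0)).div_const (q-1)).div
      (hasDerivAt_pow 2 t) (pow_ne_zero _ (ne_of_gt ht.1))).differentiableAt.differentiableWithinAt
  · intro t ht
    rw [interior_Ioc] at ht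
    have h1 : (1:ℝ)/2 + t ≠ 0 := by intro h; nlinarith [ht.1, ht.2]
    have h2 : (1:ℝ)/2 - t ≠ 0 := by intro h; nlinarith [ht.1, ht.2]
    have hd := (((hd_gg (q := q) h1 h2).sub_const (gg q 0)).div_const (q-1)).div
      (hasDerivAt_pow 2 t) (pow_ne_zero _ (ne_of_gt ht.1))
    rw [HasDerivAt.deriv (f := fun y => (gg q y - gg q 0) / (q - 1) / y ^ 2) hd]
    have hD := Dsign hq0 hq1 hq23 ht
    have heq : (g1 q t / (q-1) * t^2 - (gg q t - gg q 0)/(q-1) * ((2:ℕ) * t^(2-1))) / (t^2)^2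
        = ((t * g1 q t - 2 * (gg q t - gg q 0)) / (q - 1)) / t^3 := by
      have ht0 : t ≠ 0 := ne_of_gt ht.1
      field_simp
      ring
    rw [heq]
    exact div_nonneg hD (pow_nonneg ht.1.le 3)

/-- Key inequality: Φ(b) a² ≤ Φ(a) b² for 0 ≤ b ≤ a ≤ 1/2. -/
lemma key_ineq {q : ℝ} (hq0 : 0 < q) (hq1 : q ≠ 1) (hq23 : 0 ≤ (q-2)*(q-3))
    {a b : ℝ} (hb : 0 ≤ b) (hba : b ≤ a) (ha : a ≤ 1/2) :
    (gg q b - gg q 0) / (q - 1) * a^2 ≤ (gg q a - gg q 0) / (q - 1) * b^2 := by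
  rcases eq_or_lt_of_le hb with hb0 | hb0
  · rw [← hb0]; simp
  · have ha0 : 0 < a := lt_of_lt_of_le hb0 hba
    have := r_mono hq0 hq1 hq23 ⟨hb0, hba.trans ha⟩ ⟨ha0, ha⟩ hba
    rw [div_le_div_iff₀ (by positivity) (by positivity)] at this
    linarith

lemma gg_zero (q : ℝ) : gg q 0 = 2 ^ (1 - q) := by
  unfold gg
  rw [add_zero, sub_zero]
  have h : ((1:ℝ)/2) ^ q = 2 ^ (-q) := by
    rw [one_div, Real.inv_rpow (by norm_num : (0:ℝ) ≤ 2),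
      ← Real.rpow_neg (by norm_num : (0:ℝ) ≤ 2)]
  rw [h, ← two_mul, show (1 : ℝ) - q = 1 + -q by ring,
    Real.rpow_add (by norm_num), Real.rpow_one]

lemma gg_abs (q y : ℝ) : gg q y = gg q |y| := by
  rcases le_or_gt 0 y with h | h
  · rw [abs_of_nonneg h]
  · rw [abs_of_neg h]
    unfold gg
    rw [show (1:ℝ)/2 + -y = 1/2 - y by ring, show (1:ℝ)/2 - -y = 1/2 + y by ring]
    exact add_comm _ _

lemma bern_gap_gt {q : ℝ} (hq : 1 < q) : 0 < 2 ^ (1-q) + q - 2 := by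
  rcases le_or_gt 2 q with h2 | h2
  · have : (0:ℝ) < 2 ^ (1-q) := Real.rpow_pos_of_pos (by norm_num) _
    linarith
  · have hb := rpow_one_add_lt_one_add_mul_self (s := 1) (by norm_num) (by norm_num)
      (p := q - 1) (by linarith) (by linarith)
    have hb' : (2:ℝ) ^ (q-1) < q := by norm_num at hb; linarith
    have hpos : (0:ℝ) < 2 ^ (q-1) := Real.rpow_pos_of_pos (by norm_num) _
    have hinv : (2:ℝ) ^ (1-q) = ((2:ℝ) ^ (q-1))⁻¹ := by
      rw [show (1:ℝ) - q = -(q-1) by ring, Real.rpow_neg (by norm_num)]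
    have hmul : (2 - q) * 2 ^ (q-1) < 1 := by nlinarith
    rw [hinv]
    have h3 : 2 - q < ((2:ℝ) ^ (q-1))⁻¹ := by
      nlinarith [mul_inv_cancel₀ (ne_of_gt hpos), inv_pos.mpr hpos]
    linarith
  
lemma bern_gap_lt {q : ℝ} (hq0 : 0 < q) (hq : q < 1) : 2 ^ (1-q) + q - 2 < 0 := by
  have hb := rpow_one_add_lt_one_add_mul_self (s := 1) (by norm_num) (by norm_num)
    (p := 1 - q) (by linarith) (by linarith)
  norm_num at hb
  linarith

theorem tsallis_pointwise_bound
    (q : ℝ) (hq : q ∈ Set.Icc (0:ℝ) 2 ∪ Set.Ici (3:ℝ)) (hq1 : q ≠ 1)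
    (α : ℝ) (hα : α ∈ Set.Icc (0:ℝ) 1)
    (p : ℝ) (hp : p ∈ Set.Icc (0:ℝ) 1) :
    tq q (α * p + (1 - α) * (1 - p)) ≥
      4 * ((α ^ q + (1 - α) ^ q - 2 ^ (1 - q)) / (α ^ q + (1 - α) ^ q + q - 2))
        * (p * (1 - p)) * (1 - tq q α) + tq q α := by
  obtain ⟨hα0, hα1⟩ := hα
  obtain ⟨hp0, hp1⟩ := hp
  by_cases hq0 : q = 0
  · subst hq0
    norm_num [tq, Real.rpow_zero, Real.rpow_one]
  have hqnn : 0 ≤ q := by rcases hq with ⟨h, _⟩ | h <;> [exact h; linarith [mem_Ici.mp h]]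
  have hqpos : 0 < q := lt_of_le_of_ne hqnn (Ne.symm hq0)
  have hq1' : q - 1 ≠ 0 := sub_ne_zero.mpr hq1
  have hq23 : 0 ≤ (q-2)*(q-3) := by
    rcases hq with ⟨h0, h2⟩ | h3
    · nlinarith
    · have := mem_Ici.mp h3; nlinarith
  set a0 : ℝ := α - 1/2 with ha0def
  set w : ℝ := (2*p - 1) * a0 with hwdef
  have ha12 : |a0| ≤ 1/2 := abs_le.mpr ⟨by simp [ha0def]; linarith, by simp [ha0def]; linarith⟩
  have hm1 : |2*p - 1| ≤ 1 := abs_le.mpr ⟨by linarith, by linarith⟩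
  -- key inequality in Φ form
  have hΦa : 0 ≤ (gg q |a0| - gg q 0) / (q - 1) :=
    phi_nonneg hqpos hq1 ⟨abs_nonneg _, ha12⟩
  have hkey : (gg q w - gg q 0) / (q - 1) ≤
      (2*p - 1)^2 * ((gg q a0 - gg q 0) / (q - 1)) := by
    rw [gg_abs q w, gg_abs q a0]
    rcases eq_or_lt_of_le (abs_nonneg a0) with h0 | h0
    · have hw0 : |w| = 0 := by rw [hwdef, abs_mul, ← h0, mul_zero]
      rw [hw0, ← h0]
      simp
    · have hb : (0:ℝ) ≤ |2*p-1| * |a0| := by positivity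
      have hba : |2*p-1| * |a0| ≤ |a0| := by nlinarith
      have hk := key_ineq hqpos hq1 hq23 hb hba ha12
      have hwabs : |w| = |2*p-1| * |a0| := by rw [hwdef, abs_mul]
      rw [hwabs]
      have hsq : (|2*p-1| * |a0|)^2 = (2*p-1)^2 * |a0|^2 := by
        rw [mul_pow, sq_abs, sq_abs]
      rw [hsq] at hk
      have ha2 : (0:ℝ) < |a0|^2 := by positivity
      have e : (gg q |a0| - gg q 0)/(q-1) * ((2*p-1)^2 * |a0|^2)
          = ((2*p-1)^2 * ((gg q |a0| - gg q 0)/(q-1))) * |a0|^2 := by ring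
      rw [e] at hk
      exact (mul_le_mul_iff_of_pos_right ha2).mp hk
  -- denominator nonzero
  have hda : gg q a0 + q - 2 =
      (q-1) * ((gg q |a0| - gg q 0)/(q-1)) + (2^(1-q) + q - 2) := by
    rw [← gg_abs, gg_zero]
    field_simp
    ring
  have hd : gg q a0 + q - 2 ≠ 0 := by
    rcases lt_or_gt_of_ne hq1 with h | h
    · have hb := bern_gap_lt hqpos h
      have : (q-1) * ((gg q |a0| - gg q 0)/(q-1)) ≤ 0 := by nlinarith
      intro hcon; rw [hda] at hcon; linarith
    · have hb := bern_gap_gt h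
      have : 0 ≤ (q-1) * ((gg q |a0| - gg q 0)/(q-1)) := by nlinarith
      intro hcon; rw [hda] at hcon; linarith
  -- rewrite everything via gg
  have hαa : α = 1/2 + a0 := by rw [ha0def]; ring
  have hs : α ^ q + (1 - α) ^ q = gg q a0 := by
    rw [show (1:ℝ) - α = 1/2 - a0 by rw [ha0def]; ring, hαa]
    rfl
  have htqα : tq q α = (1 - gg q a0) / (q - 1) := by
    unfold tq
    rw [show (1:ℝ) - α ^ q - (1 - α) ^ q = 1 - (α ^ q + (1 - α) ^ q) by ring, hs]
  have htqx : tq q (α * p + (1 - α) * (1 - p)) = (1 - gg q w) / (q - 1) := by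
    unfold tq gg
    rw [show α * p + (1 - α) * (1 - p) = 1/2 + w by rw [hwdef, ha0def]; ring]
    rw [show (1:ℝ) - (1/2 + w) = 1/2 - w by ring]
    ring
  rw [ge_iff_le, htqx, htqα, hs, ← gg_zero]
  -- final algebra
  have hL : 4 * ((gg q a0 - gg q 0) / (gg q a0 + q - 2)) * (p * (1 - p))
      * (1 - (1 - gg q a0) / (q - 1))
      = (1 - (2*p-1)^2) * ((gg q a0 - gg q 0) / (q - 1)) := by
    field_simp
    ring
  rw [hL]
  have e1 : (1 - gg q w)/(q-1) = (1 - gg q a0)/(q-1)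
      + ((gg q a0 - gg q 0)/(q-1) - (gg q w - gg q 0)/(q-1)) := by ring
  rw [e1]
  linarith [hkey]
end

section
/- Let q = 3, α ∈ [0,1], p ∈ [0,1]. Then t_3(αp + (1-α)(1-p)) = 4 · ((α^3 + (1-α)^3 - 1/4)/(α^3 + (1-α)^3 + 1)) · p(1-p) · (1 - t_3(α)) + t_3(α). -/
open Real

theorem tsallis_pointwise_eq_q_three
    (α : ℝ) (hα : α ∈ Set.Icc (0:ℝ) 1)
    (p : ℝ) (hp : p ∈ Set.Icc (0:ℝ) 1) :
    tq 3 (α * p + (1 - α) * (1 - p)) =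
      4 * ((α ^ (3:ℝ) + (1 - α) ^ (3:ℝ) - 1/4) / (α ^ (3:ℝ) + (1 - α) ^ (3:ℝ) + 1))
        * (p * (1 - p)) * (1 - tq 3 α) + tq 3 α := by
  have h3 : (3:ℝ) = ((3:ℕ):ℝ) := by norm_num
  unfold tq
  rw [h3]
  simp only [Real.rpow_natCast]
  have hD : α ^ 3 + (1 - α) ^ 3 + 1 ≠ 0 := by nlinarith [sq_nonneg α, sq_nonneg (1-α), sq_nonneg (2*α-1), hα.1, hα.2, sq_nonneg (α*(1-α))]
  field_simp
  ring
end

section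
/- Let α ∈ [0,1] and p ∈ [0,1]. Then h(αp + (1-α)(1-p)) ≥ 4 · (ln 2 - h(α)) · p(1-p) + h(α), where h is the binary entropy function (this is the q → 1 limit case of the Tsallis inequality). -/
open Real

/-- Binary entropy `h(x) = -x ln x - (1-x) ln(1-x)` (natural logarithm, `ln 0 · 0 = 0`). -/
noncomputable def binEnt (x : ℝ) : ℝ := -(x * Real.log x) - (1 - x) * Real.log (1 - x)



noncomputable def Gtt (u : ℝ) : ℝ :=
  ((1+u) * Real.log (1+u) + (1-u) * Real.log (1-u)) / 2

lemma Gtt_zero : Gtt 0 = 0 := by simp [Gtt]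

lemma Gtt_neg (u : ℝ) : Gtt (-u) = Gtt u := by
  unfold Gtt
  rw [show (1:ℝ) + -u = 1 - u by ring, show (1:ℝ) - -u = 1 + u by ring]
  ring

lemma continuous_Gtt : Continuous Gtt := by
  have h1 : Continuous fun u : ℝ => (1+u) * Real.log (1+u) :=
    Real.continuous_mul_log.comp (by continuity)
  have h2 : Continuous fun u : ℝ => (1-u) * Real.log (1-u) :=
    Real.continuous_mul_log.comp (by continuity)
  exact (h1.add h2).div_const 2

lemma hasDerivAt_Gtt {u : ℝ} (h1 : -1 < u) (h2 : u < 1) :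
    HasDerivAt Gtt ((Real.log (1+u) - Real.log (1-u))/2) u := by
  have hu1 : (1:ℝ) + u ≠ 0 := by linarith
  have hu2 : (1:ℝ) - u ≠ 0 := by linarith
  have d1 : HasDerivAt (fun u : ℝ => (1+u) * Real.log (1+u))
      (Real.log (1+u) + 1) u := by
    have hl : HasDerivAt (fun u : ℝ => Real.log (1+u)) (1/(1+u)) u := by
      simpa [Function.comp_def] using (Real.hasDerivAt_log hu1).comp u ((hasDerivAt_id u).const_add 1)
    have := ((hasDerivAt_id u).const_add 1).mul hl
    refine HasDerivAt.congr_deriv this ?_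
    simp only [id]
    field_simp
  have d2 : HasDerivAt (fun u : ℝ => (1-u) * Real.log (1-u))
      (-(Real.log (1-u) + 1)) u := by
    have hl : HasDerivAt (fun u : ℝ => Real.log (1-u)) (-(1/(1-u))) u := by
      have := (Real.hasDerivAt_log hu2).comp u ((hasDerivAt_id u).neg.const_add 1)
      simpa [Function.comp_def] using this
    have := (((hasDerivAt_id u).neg.const_add 1)).mul hl
    refine HasDerivAt.congr_deriv this ?_
    simp only [Pi.neg_apply, id]
    field_simp
    ring
  have := (d1.add d2).div_const 2
  refine HasDerivAt.congr_deriv this ?_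
  ring


lemma logratio_le {q t : ℝ} (hq0 : 0 ≤ q) (hq1 : q ≤ 1) (ht0 : 0 ≤ t) (ht1 : t < 1) :
    Real.log (1+q*t) - Real.log (1-q*t) ≤ q * (Real.log (1+t) - Real.log (1-t)) := by
  set g : ℝ → ℝ := fun s =>
    q * (Real.log (1+s) - Real.log (1-s)) - (Real.log (1+q*s) - Real.log (1-q*s)) with hg
  have key : ∀ s, 0 ≤ s → s < 1 →
      HasDerivAt g (q * (1/(1+s) + 1/(1-s)) - (q/(1+q*s) + q/(1-q*s))) s := by
    intro s hs0 hs1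
    have hqs1 : q*s < 1 := lt_of_le_of_lt (by nlinarith) hs1
    have h1 : (1:ℝ) + s ≠ 0 := by linarith
    have h2 : (1:ℝ) - s ≠ 0 := by linarith
    have h3 : (1:ℝ) + q*s ≠ 0 := by nlinarith
    have h4 : (1:ℝ) - q*s ≠ 0 := by nlinarith
    have d1 : HasDerivAt (fun s : ℝ => Real.log (1+s)) (1/(1+s)) s := by
      simpa [Function.comp_def] using (Real.hasDerivAt_log h1).comp s ((hasDerivAt_id s).const_add 1)
    have d2 : HasDerivAt (fun s : ℝ => Real.log (1-s)) (-(1/(1-s))) s := by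
      simpa [Function.comp_def] using (Real.hasDerivAt_log h2).comp s ((hasDerivAt_id s).neg.const_add 1)
    have d3 : HasDerivAt (fun s : ℝ => Real.log (1+q*s)) (q/(1+q*s)) s := by
      have := (Real.hasDerivAt_log h3).comp s
        (((hasDerivAt_id s).const_mul q).const_add 1)
      simpa [mul_comm, div_eq_inv_mul, Function.comp_def] using this
    have d4 : HasDerivAt (fun s : ℝ => Real.log (1-q*s)) (-(q/(1-q*s))) s := by
      have h := (Real.hasDerivAt_log h4).comp s
        ((((hasDerivAt_id s).const_mul q).neg).const_add 1)
      have hf : (fun x : ℝ => Real.log (1 + (-fun y => q * id y) x)) = fun s : ℝ => Real.log (1 - q*s) := by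
        funext y; simp [sub_eq_add_neg]
      rw [Function.comp_def, hf] at h
      refine HasDerivAt.congr_deriv h ?_
      field_simp
    have := ((d1.sub d2).const_mul q).sub (d3.sub d4)
    refine HasDerivAt.congr_deriv this ?_
    ring
  have mono : MonotoneOn g (Set.Icc 0 t) := by
    apply monotoneOn_of_deriv_nonneg (convex_Icc 0 t)
    · apply ContinuousOn.sub (ContinuousOn.const_smul ?_ q) ?_ |>.congr (fun s hs => rfl)
      · exact ((Real.continuousOn_log.comp (by fun_prop) (fun s hs => by
          simp at hs ⊢; intro h; nlinarith)).sub
          (Real.continuousOn_log.comp (by fun_prop) (fun s hs => by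
          simp at hs ⊢; intro h; nlinarith)))
      · exact ((Real.continuousOn_log.comp (by fun_prop) (fun s hs => by
          simp at hs ⊢; intro h; nlinarith)).sub
          (Real.continuousOn_log.comp (by fun_prop) (fun s hs => by
          simp at hs ⊢; intro h; nlinarith)))
    · intro s hs
      rw [interior_Icc] at hs
      exact ((key s (le_of_lt hs.1) (lt_of_lt_of_le hs.2 (le_of_lt ht1))).differentiableAt).differentiableWithinAt
    · intro s hs
      rw [interior_Icc] at hs
      have hs0 := hs.1
      have hs1 : s < 1 := lt_of_lt_of_le hs.2 (le_of_lt ht1)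
      rw [(key s (le_of_lt hs0) hs1).deriv]
      have hqs1 : q*s < 1 := lt_of_le_of_lt (by nlinarith) hs1
      have hq2 : (q*s)^2 ≤ s^2 := by
        nlinarith [mul_nonneg (by nlinarith : (0:ℝ) ≤ 1 - q^2) (sq_nonneg s)]
      have hs2 : (0:ℝ) < 1 - s^2 := by nlinarith
      have hqs2 : (0:ℝ) < 1 - (q*s)^2 := by nlinarith
      have hA : 1/(1+s) + 1/(1-s) = 2/(1-s^2) := by
        rw [div_add_div _ _ (by linarith) (by linarith)]
        rw [div_eq_div_iff (by nlinarith) (by linarith)]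
        ring
      have hB : 1/(1+q*s) + 1/(1-q*s) = 2/(1-(q*s)^2) := by
        have h3 : (0:ℝ) < 1 + q*s := by nlinarith
        have h4 : (0:ℝ) < 1 - q*s := by nlinarith
        rw [div_add_div _ _ (by linarith) (by linarith)]
        rw [div_eq_div_iff (by nlinarith) (by linarith)]
        ring
      have hle : 2/(1-(q*s)^2) ≤ 2/(1-s^2) := by
        apply div_le_div_of_nonneg_left (by norm_num) hs2
        linarith
      have : q/(1+q*s) + q/(1-q*s) = q * (1/(1+q*s) + 1/(1-q*s)) := by ring
      rw [this, hA, hB]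
      have := mul_le_mul_of_nonneg_left hle hq0
      linarith
  have hg0 : g 0 = 0 := by simp [hg]
  have := mono (Set.left_mem_Icc.2 ht0) (Set.right_mem_Icc.2 ht0) ht0
  rw [hg0] at this
  simp only [hg] at this
  linarith

lemma Gtt_mul_le {q t : ℝ} (hq0 : 0 ≤ q) (hq1 : q ≤ 1) (ht0 : 0 ≤ t) (ht1 : t ≤ 1) :
    Gtt (q*t) ≤ q^2 * Gtt t := by
  rcases eq_or_lt_of_le hq0 with hq | hq
  · simp [← hq, Gtt_zero]
  set F : ℝ → ℝ := fun s => q^2 * Gtt s - Gtt (q*s) with hF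
  have key : ∀ s : ℝ, 0 < s → s < 1 →
      HasDerivAt F (q^2 * ((Real.log (1+s) - Real.log (1-s))/2)
        - q * ((Real.log (1+q*s) - Real.log (1-q*s))/2)) s := by
    intro s hs0 hs1
    have hqs0 : 0 < q*s := mul_pos hq hs0
    have hqs1 : q*s < 1 := lt_of_le_of_lt (by nlinarith) hs1
    have d1 := (hasDerivAt_Gtt (by linarith) hs1).const_mul (q^2)
    have d2 : HasDerivAt (fun s => Gtt (q*s))
        (q * ((Real.log (1+q*s) - Real.log (1-q*s))/2)) s := by
      have := (hasDerivAt_Gtt (by linarith : (-1:ℝ) < q*s) hqs1).comp s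
        ((hasDerivAt_id s).const_mul q)
      simpa [mul_comm, Function.comp_def] using this
    exact d1.sub d2
  have mono : MonotoneOn F (Set.Icc 0 1) := by
    apply monotoneOn_of_deriv_nonneg (convex_Icc 0 1)
    · exact ((continuous_const.mul continuous_Gtt).sub
        (continuous_Gtt.comp (continuous_const.mul continuous_id))).continuousOn
    · intro s hs
      rw [interior_Icc] at hs
      exact (key s hs.1 hs.2).differentiableAt.differentiableWithinAt
    · intro s hs
      rw [interior_Icc] at hs
      rw [(key s hs.1 hs.2).deriv]
      have hB := logratio_le (le_of_lt hq) hq1 (le_of_lt hs.1) hs.2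
      nlinarith
  have h0 : F 0 = 0 := by simp [hF, Gtt_zero]
  have := mono (Set.mem_Icc.2 ⟨le_refl 0, by norm_num⟩) (Set.mem_Icc.2 ⟨ht0, ht1⟩) ht0
  rw [h0] at this
  simpa [hF] using this

lemma Gtt_abs (u : ℝ) : Gtt |u| = Gtt u := by
  rcases abs_cases u with ⟨h, _⟩ | ⟨h, _⟩
  · rw [h]
  · rw [h, Gtt_neg]

lemma binEnt_eq {x : ℝ} (h0 : 0 ≤ x) (h1 : x ≤ 1) :
    binEnt x = Real.log 2 - Gtt (2*x - 1) := by
  have e1 : x * Real.log (2*x) = x * Real.log 2 + x * Real.log x := by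
    rcases eq_or_lt_of_le h0 with h | h
    · simp [← h]
    · rw [Real.log_mul two_ne_zero (ne_of_gt h)]; ring
  have e2 : (1-x) * Real.log (2*(1-x)) = (1-x) * Real.log 2 + (1-x) * Real.log (1-x) := by
    rcases eq_or_lt_of_le h1 with h | h
    · rw [h]; simp
    · rw [Real.log_mul two_ne_zero (by linarith : (1:ℝ) - x ≠ 0)]; ring
  have : Gtt (2*x - 1) = x * Real.log (2*x) + (1-x) * Real.log (2*(1-x)) := by
    unfold Gtt
    rw [show (1:ℝ) + (2*x-1) = 2*x by ring, show (1:ℝ) - (2*x-1) = 2*(1-x) by ring]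
    ring
  rw [this, e1, e2]
  unfold binEnt
  ring


theorem shannon_pointwise_bound
    (α : ℝ) (hα : α ∈ Set.Icc (0:ℝ) 1)
    (p : ℝ) (hp : p ∈ Set.Icc (0:ℝ) 1) :
    binEnt (α * p + (1 - α) * (1 - p)) ≥
      4 * (Real.log 2 - binEnt α) * (p * (1 - p)) + binEnt α := by
  obtain ⟨hα0, hα1⟩ := hα
  obtain ⟨hp0, hp1⟩ := hp
  have hs0 : 0 ≤ α * p + (1 - α) * (1 - p) := by nlinarith
  have hs1 : α * p + (1 - α) * (1 - p) ≤ 1 := by nlinarith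
  rw [binEnt_eq hs0 hs1, binEnt_eq hα0 hα1]
  have key : Gtt ((2*p-1) * (2*α-1)) ≤ (2*p-1)^2 * Gtt (2*α-1) := by
    have h := Gtt_mul_le (abs_nonneg (2*p-1)) (abs_le.2 ⟨by linarith, by linarith⟩)
      (abs_nonneg (2*α-1)) (abs_le.2 ⟨by linarith, by linarith⟩)
    rw [← abs_mul, Gtt_abs, sq_abs, Gtt_abs] at h
    exact h
  have harg : 2 * (α * p + (1 - α) * (1 - p)) - 1 = (2*p-1) * (2*α-1) := by ring
  rw [harg]
  nlinarith [key]
end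

section
/- Let q ∈ [0,2] ∪ [3,∞) with q ≠ 1, λ ∈ [0,1], ε ∈ [0, π/2], and θ ∈ ℝ. Set μ_X(θ) = λ sin²θ + (1-λ)cos²θ and μ_Y(θ) = λ sin²(θ+ε) + (1-λ)cos²(θ+ε), and let c = cos ε if ε ≤ π/4 and c = sin ε if ε > π/4. Then t_q(μ_X(θ)) + t_q(μ_Y(θ)) - 2 t_q(λ) ≥ 2 · ((λ^q + (1-λ)^q - 2^{1-q})/(λ^q + (1-λ)^q + q - 2)) · (1 - t_q(λ)) · (1 - c²). (This is the main Tsallis entropic conditional uncertainty relation, expressed through the nonzero eigenvalues μ_X(θ), 1-μ_X(θ) and μ_Y(θ), 1-μ_Y(θ) of the post-measurement states ρ_{XB} and ρ_{YB}, whose conditional Tsallis entropies satisfy T_q(X|B) + T_q(Y|B) = t_q(μ_X(θ)) + t_q(μ_Y(θ)) - 2 t_q(λ).) -/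
open Real

open Set

private lemma hasDerivAt_rpow_shift (p a : ℝ) (ha : 0 < a) :
    HasDerivAt (fun x : ℝ => x ^ p) (p * a ^ (p - 1)) a :=
  Real.hasDerivAt_rpow_const (Or.inl (ne_of_gt ha))

private lemma W_nonneg (q b : ℝ) (hb : 0 < b) (h23 : 0 ≤ (q-2) * (q-3)) :
    ∀ a ∈ Ici b, 0 ≤ b ^ (q-2) - a ^ (q-2) + (q-2) * (a - b) * a ^ (q-3) := by
  set f : ℝ → ℝ := fun x => b ^ (q-2) - x ^ (q-2) + (q-2) * (x - b) * x ^ (q-3) with hf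
  have hder : ∀ a : ℝ, 0 < a →
      HasDerivAt f ((q-2) * (q-3) * (a - b) * a ^ (q-4)) a := by
    intro a ha
    have h1 : HasDerivAt (fun x : ℝ => x ^ (q-2)) ((q-2) * a ^ (q-3)) a := by
      have := hasDerivAt_rpow_shift (q-2) a ha
      simpa [show q - 2 - 1 = q - 3 by ring] using this
    have h2 : HasDerivAt (fun x : ℝ => x ^ (q-3)) ((q-3) * a ^ (q-4)) a := by
      have := hasDerivAt_rpow_shift (q-3) a ha
      simpa [show q - 3 - 1 = q - 4 by ring] using this
    have h4 : HasDerivAt (fun x : ℝ => (q-2) * (x - b)) (q-2) a := by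
      simpa using ((hasDerivAt_id a).sub_const b).const_mul (q-2)
    have h3 := h4.mul h2
    have h5 := ((hasDerivAt_const a (b ^ (q-2))).sub h1).add h3
    refine h5.congr_deriv ?_
    have hpow : a ^ (q-3) = a ^ (q-4) * a := by
      rw [show q-3 = (q-4)+1 by ring, Real.rpow_add ha, Real.rpow_one]
    rw [hpow]; ring
  have hmono : MonotoneOn f (Ici b) := by
    apply monotoneOn_of_deriv_nonneg (convex_Ici b)
    · intro a ha
      exact (hder a (lt_of_lt_of_le hb ha)).continuousAt.continuousWithinAt
    · intro a ha
      rw [interior_Ici] at ha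
      exact (hder a (lt_trans hb ha)).differentiableAt.differentiableWithinAt
    · intro a ha
      rw [interior_Ici] at ha
      rw [(hder a (lt_trans hb ha)).deriv]
      have h1 : 0 ≤ a - b := le_of_lt (sub_pos.mpr ha)
      have h2 : (0:ℝ) ≤ a ^ (q-4) := Real.rpow_nonneg (le_of_lt (lt_trans hb ha)) _
      positivity
  intro a ha
  have h0 : f b = 0 := by simp [hf]
  have := hmono (self_mem_Ici) ha ha
  rw [h0] at this
  exact this

private lemma G_nonneg (q b : ℝ) (hb : 0 < b) (h23 : 0 ≤ (q-2) * (q-3)) :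
    ∀ a ∈ Ici b, 0 ≤ (q-1) * ((q-1) * (a-b) * (a ^ (q-2) + b ^ (q-2))
      - 2 * (a ^ (q-1) - b ^ (q-1))) := by
  set g : ℝ → ℝ := fun x => (q-1) * ((q-1) * (x-b) * (x ^ (q-2) + b ^ (q-2))
      - 2 * (x ^ (q-1) - b ^ (q-1))) with hg
  have hder : ∀ a : ℝ, 0 < a →
      HasDerivAt g ((q-1)^2 * (b ^ (q-2) - a ^ (q-2) + (q-2) * (a - b) * a ^ (q-3))) a := by
    intro a ha
    have h1 : HasDerivAt (fun x : ℝ => x ^ (q-1)) ((q-1) * a ^ (q-2)) a := by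
      have := hasDerivAt_rpow_shift (q-1) a ha
      simpa [show q - 1 - 1 = q - 2 by ring] using this
    have h2 : HasDerivAt (fun x : ℝ => x ^ (q-2)) ((q-2) * a ^ (q-3)) a := by
      have := hasDerivAt_rpow_shift (q-2) a ha
      simpa [show q - 2 - 1 = q - 3 by ring] using this
    have h4 : HasDerivAt (fun x : ℝ => (q-1) * (x - b)) (q-1) a := by
      simpa using ((hasDerivAt_id a).sub_const b).const_mul (q-1)
    have h3 := h4.mul (h2.add_const (b ^ (q-2)))
    have h5 := (h1.sub_const (b ^ (q-1))).const_mul (2:ℝ)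
    have h6 := (h3.sub h5).const_mul (q-1)
    refine h6.congr_deriv ?_
    ring
  have hmono : MonotoneOn g (Ici b) := by
    apply monotoneOn_of_deriv_nonneg (convex_Ici b)
    · intro a ha
      exact (hder a (lt_of_lt_of_le hb ha)).continuousAt.continuousWithinAt
    · intro a ha
      rw [interior_Ici] at ha
      exact (hder a (lt_trans hb ha)).differentiableAt.differentiableWithinAt
    · intro a ha
      rw [interior_Ici] at ha
      rw [(hder a (lt_trans hb ha)).deriv]
      have hW := W_nonneg q b hb h23 a (mem_Ici.mpr (le_of_lt ha))
      positivity
  intro a ha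
  have h0 : g b = 0 := by simp [hg]
  have := hmono (self_mem_Ici) ha ha
  rw [h0] at this
  exact this

/-- `(q-1) * ((1/2+u)^q + (1/2-u)^q)`. -/
noncomputable def Phi (q u : ℝ) : ℝ := (q-1) * ((1/2 + u) ^ q + (1/2 - u) ^ q)

/-- derivative of `Phi q`. -/
noncomputable def Pd (q u : ℝ) : ℝ := (q-1) * (q * (1/2 + u) ^ (q-1) - q * (1/2 - u) ^ (q-1))

private lemma hasDerivAt_addc (p c : ℝ) {u : ℝ} (h : 0 < c + u) :
    HasDerivAt (fun x : ℝ => (c + x) ^ p) (p * (c + u) ^ (p-1)) u := by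
  have h1 : HasDerivAt (fun x : ℝ => c + x) 1 u := by simpa using (hasDerivAt_id u).const_add c
  have h2 := (Real.hasDerivAt_rpow_const (x := c + u) (p := p)
    (Or.inl (ne_of_gt h))).comp u h1
  rw [mul_one] at h2
  exact h2

private lemma hasDerivAt_subc (p c : ℝ) {u : ℝ} (h : 0 < c - u) :
    HasDerivAt (fun x : ℝ => (c - x) ^ p) (-(p * (c - u) ^ (p-1))) u := by
  have h1 : HasDerivAt (fun x : ℝ => c - x) (-1) u := by simpa using (hasDerivAt_id u).const_sub c
  have h2 := (Real.hasDerivAt_rpow_const (x := c - u) (p := p)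
    (Or.inl (ne_of_gt h))).comp u h1
  rw [mul_neg_one] at h2
  exact h2

private lemma hasDerivAt_Phi (q : ℝ) {u : ℝ} (h1 : 0 < 1/2 + u) (h2 : 0 < 1/2 - u) :
    HasDerivAt (Phi q) (Pd q u) u := by
  have ha := hasDerivAt_addc q (1/2) h1
  have hb := hasDerivAt_subc q (1/2) h2
  have := ((ha.add hb).const_mul (q-1))
  have heq : Pd q u = (q - 1) * (q * (1 / 2 + u) ^ (q - 1) + -(q * (1 / 2 - u) ^ (q - 1))) := by
    unfold Pd; ring
  rw [heq]
  exact this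

private lemma hasDerivAt_Pd (q : ℝ) {u : ℝ} (h1 : 0 < 1/2 + u) (h2 : 0 < 1/2 - u) :
    HasDerivAt (Pd q)
      ((q-1) * (q * ((q-1) * (1/2 + u) ^ (q-2)) + q * ((q-1) * (1/2 - u) ^ (q-2)))) u := by
  have ha := (hasDerivAt_addc (q-1) (1/2) h1).const_mul q
  have hb := (hasDerivAt_subc (q-1) (1/2) h2).const_mul q
  have := ((ha.sub hb).const_mul (q-1))
  rw [show q - 1 - 1 = q - 2 by ring] at this
  have heq : (q-1) * (q * ((q-1) * (1/2 + u) ^ (q-2)) + q * ((q-1) * (1/2 - u) ^ (q-2)))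
      = (q - 1) * (q * ((q - 1) * (1 / 2 + u) ^ (q - 2)) - q * -((q - 1) * (1 / 2 - u) ^ (q - 2))) := by
    ring
  rw [heq]
  exact this

private lemma N_nonneg (q : ℝ) (hq0 : 0 ≤ q) (h23 : 0 ≤ (q-2) * (q-3)) :
    ∀ u ∈ Ico (0:ℝ) (1/2), 0 ≤ u * Pd q u - 2 * (Phi q u - Phi q 0) := by
  set N : ℝ → ℝ := fun u => u * Pd q u - 2 * (Phi q u - Phi q 0) with hN
  have hder : ∀ u ∈ Ico (0:ℝ) (1/2),
      HasDerivAt N (u * ((q-1) * (q * ((q-1) * (1/2 + u) ^ (q-2))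
        + q * ((q-1) * (1/2 - u) ^ (q-2)))) - Pd q u) u := by
    intro u hu
    have h1 : 0 < 1/2 + u := by linarith [hu.1]
    have h2 : 0 < 1/2 - u := by linarith [hu.2]
    have hP := hasDerivAt_Pd q h1 h2
    have hPhi := hasDerivAt_Phi q h1 h2
    have hm := (hasDerivAt_id u).mul hP
    have := hm.sub ((hPhi.sub_const (Phi q 0)).const_mul 2)
    refine this.congr_deriv ?_
    simp only [id_eq]
    ring
  have hmono : MonotoneOn N (Ico 0 (1/2)) := by
    apply monotoneOn_of_deriv_nonneg (convex_Ico 0 (1/2))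
    · intro u hu
      exact (hder u hu).continuousAt.continuousWithinAt
    · intro u hu
      rw [interior_Ico] at hu
      exact (hder u (Ioo_subset_Ico_self hu)).differentiableAt.differentiableWithinAt
    · intro u hu
      rw [interior_Ico] at hu
      rw [(hder u (Ioo_subset_Ico_self hu)).deriv]
      have h1 : 0 < 1/2 + u := by linarith [hu.1]
      have h2 : 0 < 1/2 - u := by linarith [hu.2]
      have hG := G_nonneg q (1/2 - u) h2 h23 (1/2 + u) (by simp [mem_Ici]; linarith [hu.1])
      have heq : u * ((q-1) * (q * ((q-1) * (1/2 + u) ^ (q-2))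
            + q * ((q-1) * (1/2 - u) ^ (q-2)))) - Pd q u
          = (q/2) * ((q-1) * ((q-1) * ((1/2+u) - (1/2-u))
              * ((1/2+u) ^ (q-2) + (1/2-u) ^ (q-2))
            - 2 * ((1/2+u) ^ (q-1) - (1/2-u) ^ (q-1)))) := by
        unfold Pd; ring
      rw [heq]
      exact mul_nonneg (by linarith) hG
  intro u hu
  have h0 : N 0 = 0 := by simp [hN]
  have := hmono (by constructor <;> norm_num) hu hu.1
  rw [h0] at this
  exact this

private lemma Phi_contOn (q : ℝ) (hq0 : 0 ≤ q) : ContinuousOn (Phi q) (Icc 0 (1/2)) := by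
  unfold Phi
  apply ContinuousOn.mul continuousOn_const
  apply ContinuousOn.add
  · exact (continuousOn_const.add continuousOn_id).rpow_const fun x _ => Or.inr hq0
  · exact (continuousOn_const.sub continuousOn_id).rpow_const fun x _ => Or.inr hq0

private lemma Pd_nonneg (q : ℝ) (hq0 : 0 ≤ q) {u : ℝ} (hu0 : 0 ≤ u) (hu2 : 0 < 1/2 - u) :
    0 ≤ Pd q u := by
  have h1 : (0:ℝ) < 1/2 + u := by linarith
  have hba : (1/2 - u : ℝ) ≤ 1/2 + u := by linarith
  unfold Pd
  rcases le_or_gt 1 q with h | h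
  · have h' := Real.rpow_le_rpow (le_of_lt hu2) hba (by linarith : (0:ℝ) ≤ q - 1)
    have hp := mul_nonneg (mul_nonneg (by linarith : (0:ℝ) ≤ q - 1) hq0) (sub_nonneg.mpr h')
    nlinarith [hp]
  · have h' := Real.rpow_le_rpow_of_nonpos hu2 hba (by linarith : q - 1 ≤ 0)
    have hp := mul_nonneg hq0 (mul_nonneg_of_nonpos_of_nonpos (by linarith : q - 1 ≤ 0)
      (by linarith : (1/2 + u) ^ (q-1) - (1/2 - u) ^ (q-1) ≤ 0))
    nlinarith [hp]

private lemma Phi_mono (q : ℝ) (hq0 : 0 ≤ q) : MonotoneOn (Phi q) (Icc 0 (1/2)) := by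
  apply monotoneOn_of_deriv_nonneg (convex_Icc 0 (1/2)) (Phi_contOn q hq0)
  · intro u hu
    rw [interior_Icc] at hu
    have h1 : (0:ℝ) < 1/2 + u := by linarith [hu.1]
    have h2 : (0:ℝ) < 1/2 - u := by linarith [hu.2]
    exact (hasDerivAt_Phi q h1 h2).differentiableAt.differentiableWithinAt
  · intro u hu
    rw [interior_Icc] at hu
    have h1 : (0:ℝ) < 1/2 + u := by linarith [hu.1]
    have h2 : (0:ℝ) < 1/2 - u := by linarith [hu.2]
    rw [(hasDerivAt_Phi q h1 h2).deriv]
    exact Pd_nonneg q hq0 (le_of_lt hu.1) h2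

private lemma keylem (q : ℝ) (hq0 : 0 ≤ q) (h23 : 0 ≤ (q-2) * (q-3)) :
    ∀ u ∈ Icc (0:ℝ) (1/2), ∀ t ∈ Icc (0:ℝ) 1,
      Phi q (t * u) - Phi q 0 ≤ t^2 * (Phi q u - Phi q 0) := by
  intro u hu t ht
  set R : ℝ → ℝ := fun v => (Phi q v - Phi q 0) / v^2 with hR
  have hmono : MonotoneOn R (Ioc 0 (1/2)) := by
    apply monotoneOn_of_deriv_nonneg (convex_Ioc 0 (1/2))
    · apply ContinuousOn.div
      · exact ((Phi_contOn q hq0).mono Ioc_subset_Icc_self).sub continuousOn_const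
      · exact (continuous_pow 2).continuousOn
      · intro v hv; exact pow_ne_zero _ (ne_of_gt hv.1)
    · intro v hv
      rw [interior_Ioc] at hv
      have h1 : (0:ℝ) < 1/2 + v := by linarith [hv.1]
      have h2 : (0:ℝ) < 1/2 - v := by linarith [hv.2]
      exact (((hasDerivAt_Phi q h1 h2).sub_const (Phi q 0)).div
        ((hasDerivAt_pow 2 v)) (pow_ne_zero _ (ne_of_gt hv.1))).differentiableAt.differentiableWithinAt
    · intro v hv
      rw [interior_Ioc] at hv
      have h1 : (0:ℝ) < 1/2 + v := by linarith [hv.1]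
      have h2 : (0:ℝ) < 1/2 - v := by linarith [hv.2]
      have hd := ((hasDerivAt_Phi q h1 h2).sub_const (Phi q 0)).div
        ((hasDerivAt_pow 2 v)) (pow_ne_zero _ (ne_of_gt hv.1))
      rw [(show HasDerivAt R _ v from hd).deriv]
      have hN := N_nonneg q hq0 h23 v ⟨le_of_lt hv.1, hv.2⟩
      apply div_nonneg
      · have heq : Pd q v * v ^ 2 - (Phi q v - Phi q 0) * (((2:ℕ):ℝ) * v ^ (2 - 1))
            = v * (v * Pd q v - 2 * (Phi q v - Phi q 0)) := by push_cast; ring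
        rw [heq]
        exact mul_nonneg (le_of_lt hv.1) hN
      · positivity
  rcases eq_or_lt_of_le hu.1 with h0 | hupos
  · simp [← h0]
  rcases eq_or_lt_of_le ht.1 with h0 | htpos
  · simp [← h0]
  have htu : 0 < t * u := mul_pos htpos hupos
  have htu2 : t * u ≤ u := by nlinarith [ht.2]
  have := hmono ⟨htu, le_trans htu2 hu.2⟩ ⟨hupos, hu.2⟩ htu2
  rw [hR] at this
  simp only [] at this
  rw [div_le_div_iff₀ (by positivity) (by positivity)] at this
  have hu2 : (0:ℝ) < u^2 := by positivity
  nlinarith [this]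

private lemma trig_bound (θ ε : ℝ) (hε1 : 0 ≤ ε) (hε2 : ε ≤ π/2) (c : ℝ)
    (hc : c = if ε ≤ π/4 then Real.cos ε else Real.sin ε) :
    2 * (1 - c^2) ≤ Real.sin (2*θ)^2 + Real.sin (2*(θ+ε))^2 := by
  have h1 := Real.cos_sq (2*θ)
  have h2 := Real.cos_sq (2*(θ+ε))
  have h3 := Real.sin_sq (2*θ)
  have h4 := Real.sin_sq (2*(θ+ε))
  have h5 : Real.cos (2*(2*θ)) + Real.cos (2*(2*(θ+ε)))
      = 2 * Real.cos (4*θ+2*ε) * Real.cos (2*ε) := by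
    rw [Real.cos_add_cos, show (2*(2*θ) + 2*(2*(θ+ε)))/2 = 4*θ+2*ε by ring,
      show (2*(2*θ) - 2*(2*(θ+ε)))/2 = -(2*ε) by ring, Real.cos_neg]
  have hsum : Real.sin (2*θ)^2 + Real.sin (2*(θ+ε))^2
      = 1 - Real.cos (4*θ + 2*ε) * Real.cos (2*ε) := by
    rw [h3, h4, h1, h2]; linarith [h5]
  rw [hsum]
  have hle := Real.cos_le_one (4*θ+2*ε)
  have hge := Real.neg_one_le_cos (4*θ+2*ε)
  rcases le_or_gt ε (π/4) with h | h
  · rw [hc, if_pos h]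
    have hcos2 : 0 ≤ Real.cos (2*ε) :=
      Real.cos_nonneg_of_mem_Icc ⟨by linarith, by linarith⟩
    have he : Real.cos ε ^ 2 = 1/2 + Real.cos (2*ε)/2 := Real.cos_sq ε
    nlinarith
  · rw [hc, if_neg (not_le.mpr h)]
    have hcos2 : Real.cos (2*ε) ≤ 0 := by
      apply Real.cos_nonpos_of_pi_div_two_le_of_le (by linarith)
      have := Real.pi_pos
      linarith
    have he : Real.cos ε ^ 2 = 1/2 + Real.cos (2*ε)/2 := Real.cos_sq ε
    have he2 : Real.sin ε ^ 2 = 1 - Real.cos ε ^ 2 := Real.sin_sq ε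
    nlinarith

private lemma mu_eq (lam φ : ℝ) :
    lam * Real.sin φ^2 + (1-lam) * Real.cos φ^2 = 1/2 + (1/2 - lam) * Real.cos (2*φ) := by
  have h1 : Real.cos φ ^ 2 = 1/2 + Real.cos (2*φ)/2 := Real.cos_sq φ
  have h2 : Real.sin φ ^ 2 = 1 - Real.cos φ ^ 2 := Real.sin_sq φ
  rw [h2, h1]; ring

private lemma Phi_repr (q s : ℝ) :
    (q-1) * ((1/2 + s)^q + (1 - (1/2 + s))^q) = Phi q |s| := by
  rw [show 1 - (1/2 + s) = 1/2 - s by ring]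
  rcases le_or_gt 0 s with h | h
  · rw [abs_of_nonneg h]; rfl
  · rw [abs_of_neg h]
    unfold Phi
    rw [show 1/2 + -s = 1/2 - s by ring, show 1/2 - -s = 1/2 + s by ring]
    ring

private lemma obs_bound (q lam φ : ℝ) (hq0 : 0 ≤ q) (h23 : 0 ≤ (q-2) * (q-3))
    (hlam : lam ∈ Icc (0:ℝ) 1) :
    Real.sin (2*φ)^2 * (Phi q |lam - 1/2| - Phi q 0)
      ≤ Phi q |lam - 1/2| - (q-1) * ((lam * Real.sin φ^2 + (1-lam) * Real.cos φ^2)^q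
          + (1 - (lam * Real.sin φ^2 + (1-lam) * Real.cos φ^2))^q) := by
  have hu : |lam - 1/2| ∈ Icc (0:ℝ) (1/2) :=
    ⟨abs_nonneg _, abs_le.mpr ⟨by linarith [hlam.1], by linarith [hlam.2]⟩⟩
  have ht : |Real.cos (2*φ)| ∈ Icc (0:ℝ) 1 := ⟨abs_nonneg _, Real.abs_cos_le_one _⟩
  have hμ : (q-1) * ((lam * Real.sin φ^2 + (1-lam) * Real.cos φ^2)^q
      + (1 - (lam * Real.sin φ^2 + (1-lam) * Real.cos φ^2))^q)
      = Phi q (|Real.cos (2*φ)| * |lam - 1/2|) := by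
    rw [mu_eq, Phi_repr q ((1/2 - lam) * Real.cos (2*φ)), abs_mul, abs_sub_comm,
      mul_comm]
  rw [hμ]
  have hk := keylem q hq0 h23 _ hu _ ht
  have ht2 : |Real.cos (2*φ)|^2 = 1 - Real.sin (2*φ)^2 := by
    rw [sq_abs]; linarith [Real.sin_sq_add_cos_sq (2*φ)]
  rw [ht2] at hk
  nlinarith [hk]

theorem tsallis_conditional_uncertainty
    (q : ℝ) (hq : q ∈ Set.Icc (0:ℝ) 2 ∪ Set.Ici (3:ℝ)) (hq1 : q ≠ 1)
    (lam : ℝ) (hlam : lam ∈ Set.Icc (0:ℝ) 1)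
    (ε : ℝ) (hε : ε ∈ Set.Icc (0:ℝ) (π/2))
    (θ : ℝ)
    (c : ℝ) (hc : c = if ε ≤ π/4 then Real.cos ε else Real.sin ε) :
    tq q (lam * Real.sin θ ^ 2 + (1 - lam) * Real.cos θ ^ 2)
      + tq q (lam * Real.sin (θ + ε) ^ 2 + (1 - lam) * Real.cos (θ + ε) ^ 2)
      - 2 * tq q lam ≥
      2 * ((lam ^ q + (1 - lam) ^ q - 2 ^ (1 - q)) / (lam ^ q + (1 - lam) ^ q + q - 2))
        * (1 - tq q lam) * (1 - c ^ 2) := by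
  have hq0 : 0 ≤ q := by
    rcases hq with h | h
    · exact h.1
    · linarith [h.out]
  have h23 : 0 ≤ (q-2) * (q-3) := by
    rcases hq with h | h
    · exact mul_nonneg_of_nonpos_of_nonpos (by linarith [h.2]) (by linarith [h.2])
    · have := h.out; nlinarith
  have hq1' : q - 1 ≠ 0 := sub_ne_zero.mpr hq1
  have hQ : (0:ℝ) < (q-1)^2 := by positivity
  set u := |lam - 1/2| with hu_def
  have hu : u ∈ Icc (0:ℝ) (1/2) :=
    ⟨abs_nonneg _, abs_le.mpr ⟨by linarith [hlam.1], by linarith [hlam.2]⟩⟩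
  have hfl : (q-1) * (lam ^ q + (1 - lam) ^ q) = Phi q u := by
    have h := Phi_repr q (lam - 1/2)
    rw [show (1:ℝ)/2 + (lam - 1/2) = lam by ring] at h
    exact h
  have hA : 0 ≤ Phi q u - Phi q 0 := by
    have := Phi_mono q hq0 ⟨le_refl (0:ℝ), by norm_num⟩ hu hu.1
    linarith
  have h1c : 0 ≤ 1 - c^2 := by
    rcases le_or_gt ε (π/4) with h | h
    · rw [hc, if_pos h]; nlinarith [Real.neg_one_le_cos ε, Real.cos_le_one ε]
    · rw [hc, if_neg (not_le.mpr h)]; nlinarith [Real.neg_one_le_sin ε, Real.sin_le_one ε]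
  have hobsX := obs_bound q lam θ hq0 h23 hlam
  have hobsY := obs_bound q lam (θ+ε) hq0 h23 hlam
  have htrig := trig_bound θ ε hε.1 hε.2 c hc
  have hsum : 2 * (1 - c^2) * (Phi q u - Phi q 0)
      ≤ (Phi q u - (q-1) * ((lam * Real.sin θ ^ 2 + (1 - lam) * Real.cos θ ^ 2)^q
          + (1 - (lam * Real.sin θ ^ 2 + (1 - lam) * Real.cos θ ^ 2))^q))
        + (Phi q u - (q-1) * ((lam * Real.sin (θ+ε) ^ 2 + (1 - lam) * Real.cos (θ+ε) ^ 2)^q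
          + (1 - (lam * Real.sin (θ+ε) ^ 2 + (1 - lam) * Real.cos (θ+ε) ^ 2))^q)) := by
    have hmul := mul_le_mul_of_nonneg_right htrig hA
    nlinarith [hobsX, hobsY]
  have hL : tq q (lam * Real.sin θ ^ 2 + (1 - lam) * Real.cos θ ^ 2)
      + tq q (lam * Real.sin (θ + ε) ^ 2 + (1 - lam) * Real.cos (θ + ε) ^ 2)
      - 2 * tq q lam
      = ((Phi q u - (q-1) * ((lam * Real.sin θ ^ 2 + (1 - lam) * Real.cos θ ^ 2)^q
          + (1 - (lam * Real.sin θ ^ 2 + (1 - lam) * Real.cos θ ^ 2))^q))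
        + (Phi q u - (q-1) * ((lam * Real.sin (θ+ε) ^ 2 + (1 - lam) * Real.cos (θ+ε) ^ 2)^q
          + (1 - (lam * Real.sin (θ+ε) ^ 2 + (1 - lam) * Real.cos (θ+ε) ^ 2))^q))) / (q-1)^2 := by
    rw [tq, tq, tq, ← hfl]
    field_simp
    ring
  have h1tq : 1 - tq q lam = (lam ^ q + (1 - lam) ^ q + q - 2) / (q-1) := by
    rw [tq]
    field_simp
    ring
  have hmid : 2 * (1 - c^2) * (Phi q u - Phi q 0) / (q-1)^2
      ≤ tq q (lam * Real.sin θ ^ 2 + (1 - lam) * Real.cos θ ^ 2)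
      + tq q (lam * Real.sin (θ + ε) ^ 2 + (1 - lam) * Real.cos (θ + ε) ^ 2)
      - 2 * tq q lam := by
    rw [hL]
    exact div_le_div_of_nonneg_right hsum hQ.le |>.trans_eq rfl
  rcases eq_or_ne (lam ^ q + (1 - lam) ^ q + q - 2) 0 with hD | hD
  · have hz : 1 - tq q lam = 0 := by rw [h1tq, hD, zero_div]
    have : 2 * ((lam ^ q + (1 - lam) ^ q - 2 ^ (1 - q)) / (lam ^ q + (1 - lam) ^ q + q - 2))
        * (1 - tq q lam) * (1 - c ^ 2) = 0 := by rw [hz]; ring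
    rw [ge_iff_le, this]
    refine le_trans ?_ hmid
    positivity
  · have hPhi0 : Phi q 0 = (q-1) * 2 ^ (1-q) := by
      have hhalf : ((1:ℝ)/2) ^ q = ((2:ℝ)^q)⁻¹ := by
        rw [Real.div_rpow (by norm_num) (by norm_num), Real.one_rpow, one_div]
      have h2q : (2:ℝ) ^ (1-q) = 2 * ((2:ℝ)^q)⁻¹ := by
        rw [show (1:ℝ)-q = 1 + -q by ring, Real.rpow_add two_pos, Real.rpow_one,
          Real.rpow_neg (by norm_num)]
      unfold Phi
      rw [add_zero, sub_zero, hhalf, h2q]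
      ring
    have hRHSeq : 2 * ((lam ^ q + (1 - lam) ^ q - 2 ^ (1 - q)) / (lam ^ q + (1 - lam) ^ q + q - 2))
        * (1 - tq q lam) * (1 - c ^ 2)
        = 2 * (1 - c^2) * (Phi q u - Phi q 0) / (q-1)^2 := by
      rw [h1tq, ← hfl, hPhi0]
      field_simp
    rw [ge_iff_le, hRHSeq]
    exact hmid
end

section
/- Let q ∈ [0,2] ∪ [3,∞) with q ≠ 1, λ ∈ [0,1], ε ∈ [0, π/2], and θ ∈ ℝ. Set μ_X(θ) = λ sin²θ + (1-λ)cos²θ and μ_Y(θ) = λ sin²(θ+ε) + (1-λ)cos²(θ+ε). Then t_q(μ_X(θ)) + t_q(μ_Y(θ)) - 2 t_q(λ) ≥ ((λ^q + (1-λ)^q - 2^{1-q})/(λ^q + (1-λ)^q + q - 2)) · (1 - t_q(λ)) · (sin²(2θ + 2ε) + sin²(2θ)). -/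
open Real

section TsallisAuxSection
open Set

namespace TsallisAux


lemma K_nonneg {q : ℝ} (hq23 : 0 ≤ (q-2)*(q-3)) {r : ℝ} (hr : 1 ≤ r) :
    0 ≤ 1 + r ^ (q-3) * ((q-3)*r - (q-2)) := by
  set K : ℝ → ℝ := fun x => 1 + x ^ (q-3) * ((q-3)*x - (q-2)) with hK
  have hderiv : ∀ x : ℝ, 0 < x →
      HasDerivAt K ((q-3)*(q-2) * (x ^ (q-4) * (x-1))) x := by
    intro x hx0
    have h1 : HasDerivAt (fun x : ℝ => x ^ (q-3)) ((q-3) * x ^ (q-4)) x := by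
      have h := Real.hasDerivAt_rpow_const (x := x) (p := q-3) (Or.inl hx0.ne')
      convert h using 1
      rw [show q - 3 - 1 = q - 4 by ring]
    have h2 : HasDerivAt (fun x : ℝ => (q-3)*x - (q-2)) (q-3) x := by
      simpa using ((hasDerivAt_id x).const_mul (q-3)).sub_const (q-2)
    have h3 := (h1.mul h2).const_add (1:ℝ)
    refine h3.congr_deriv ?_
    have hsplit : x ^ (q-3) = x ^ (q-4) * x := by
      rw [show q-3 = (q-4)+1 by ring, Real.rpow_add_one hx0.ne']
    rw [hsplit]; ring
  have hpos : ∀ x : ℝ, 1 ≤ x → (0:ℝ) < x := fun x hx => lt_of_lt_of_le one_pos hx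
  have hmono : MonotoneOn K (Ici 1) := by
    apply monotoneOn_of_deriv_nonneg (convex_Ici 1)
    · exact fun x hx => (hderiv x (hpos x hx)).continuousAt.continuousWithinAt
    · intro x hx
      rw [interior_Ici] at hx
      exact (hderiv x (hpos x hx.le)).differentiableAt.differentiableWithinAt
    · intro x hx
      rw [interior_Ici] at hx
      rw [(hderiv x (hpos x hx.le)).deriv]
      have h1 : (0:ℝ) ≤ x ^ (q-4) := Real.rpow_nonneg (hpos x hx.le).le _
      have h2 : (0:ℝ) ≤ x - 1 := by linarith [(mem_Ioi.1 hx).le]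
      nlinarith [mul_nonneg hq23 (mul_nonneg h1 h2)]
  have h0 : K 1 = 0 := by simp [hK, Real.one_rpow]; ring
  have := hmono (mem_Ici.2 le_rfl) (mem_Ici.2 hr) hr
  rw [h0] at this
  exact this

lemma H_nonneg {q : ℝ} (hq23 : 0 ≤ (q-2)*(q-3)) {r : ℝ} (hr : 1 ≤ r) :
    0 ≤ (q-1) * ((q-1)*(r-1)*(r^(q-2)+1) - 2*(r^(q-1)-1)) := by
  set H : ℝ → ℝ := fun x => (q-1) * ((q-1)*(x-1)*(x^(q-2)+1) - 2*(x^(q-1)-1)) with hH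
  have hderiv : ∀ x : ℝ, 0 < x →
      HasDerivAt H ((q-1)^2 * (1 + x ^ (q-3) * ((q-3)*x - (q-2)))) x := by
    intro x hx0
    have h1 : HasDerivAt (fun x : ℝ => x ^ (q-2)) ((q-2) * x ^ (q-3)) x := by
      have h := Real.hasDerivAt_rpow_const (x := x) (p := q-2) (Or.inl hx0.ne')
      convert h using 1
      rw [show q - 2 - 1 = q - 3 by ring]
    have h2 : HasDerivAt (fun x : ℝ => x ^ (q-1)) ((q-1) * x ^ (q-2)) x := by
      have h := Real.hasDerivAt_rpow_const (x := x) (p := q-1) (Or.inl hx0.ne')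
      convert h using 1
      rw [show q - 1 - 1 = q - 2 by ring]
    have ha : HasDerivAt (fun x : ℝ => (q-1)*(x-1)) (q-1) x := by
      simpa using ((hasDerivAt_id x).sub_const (1:ℝ)).const_mul (q-1)
    have hb : HasDerivAt (fun x : ℝ => x^(q-2)+1) ((q-2) * x ^ (q-3)) x := h1.add_const 1
    have hc : HasDerivAt (fun x : ℝ => 2*(x^(q-1)-1)) (2*((q-1) * x ^ (q-2))) x :=
      (h2.sub_const 1).const_mul 2
    have h3 := ((ha.mul hb).sub hc).const_mul (q-1)
    refine h3.congr_deriv ?_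
    have hs1 : x ^ (q-2) = x ^ (q-3) * x := by
      rw [show q-2 = (q-3)+1 by ring, Real.rpow_add_one hx0.ne']
    rw [hs1]; ring
  have hpos : ∀ x : ℝ, 1 ≤ x → (0:ℝ) < x := fun x hx => lt_of_lt_of_le one_pos hx
  have hmono : MonotoneOn H (Ici 1) := by
    apply monotoneOn_of_deriv_nonneg (convex_Ici 1)
    · exact fun x hx => (hderiv x (hpos x hx)).continuousAt.continuousWithinAt
    · intro x hx
      rw [interior_Ici] at hx
      exact (hderiv x (hpos x hx.le)).differentiableAt.differentiableWithinAt
    · intro x hx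
      rw [interior_Ici] at hx
      rw [(hderiv x (hpos x hx.le)).deriv]
      exact mul_nonneg (sq_nonneg _) (K_nonneg hq23 hx.le)
  have h0 : H 1 = 0 := by simp [hH, Real.one_rpow]
  have := hmono (mem_Ici.2 le_rfl) (mem_Ici.2 hr) hr
  rw [h0] at this
  exact this



noncomputable def g (q t : ℝ) : ℝ := (1/2 + t) ^ q + (1/2 - t) ^ q
noncomputable def g1 (q t : ℝ) : ℝ := q * ((1/2 + t) ^ (q-1) - (1/2 - t) ^ (q-1))
noncomputable def psi (q t : ℝ) : ℝ := (q-1) * (t * g1 q t - 2 * (g q t - 2 ^ (1-q)))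

lemma g_zero (q : ℝ) : g q 0 = 2 ^ (1-q) := by
  unfold g
  have e1 : ((1:ℝ)/2 + 0) = 2⁻¹ := by norm_num
  have e2 : ((1:ℝ)/2 - 0) = 2⁻¹ := by norm_num
  rw [e1, e2, Real.inv_rpow (by norm_num : (0:ℝ) ≤ 2), ← Real.rpow_neg (by norm_num : (0:ℝ) ≤ 2),
      show (1:ℝ)-q = 1 + (-q) by ring, Real.rpow_add (by norm_num : (0:ℝ) < 2), Real.rpow_one]
  ring

lemma g_neg (q t : ℝ) : g q (-t) = g q t := by
  unfold g
  rw [show (1/2 + -t : ℝ) = 1/2 - t by ring, show (1/2 - -t : ℝ) = 1/2 + t by ring]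
  ring

lemma g_abs (q t : ℝ) : g q |t| = g q t := by
  rcases abs_cases t with ⟨h, _⟩ | ⟨h, _⟩
  · rw [h]
  · rw [h, g_neg]

lemma hasDerivAt_g (q : ℝ) {t : ℝ} (h1 : 0 < 1/2 + t) (h2 : 0 < 1/2 - t) :
    HasDerivAt (g q) (g1 q t) t := by
  have ha : HasDerivAt (fun t : ℝ => 1/2 + t) 1 t := by
    simpa using (hasDerivAt_id t).const_add (1/2 : ℝ)
  have hb : HasDerivAt (fun t : ℝ => 1/2 - t) (-1) t := by
    simpa using (hasDerivAt_id t).const_sub (1/2 : ℝ)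
  have hA := ha.rpow_const (p := q) (Or.inl h1.ne')
  have hB := hb.rpow_const (p := q) (Or.inl h2.ne')
  have h3 := hA.add hB
  show HasDerivAt (fun t : ℝ => (1/2 + t) ^ q + (1/2 - t) ^ q) _ t
  refine h3.congr_deriv ?_
  unfold g1; ring

lemma hasDerivAt_g1 (q : ℝ) {t : ℝ} (h1 : 0 < 1/2 + t) (h2 : 0 < 1/2 - t) :
    HasDerivAt (g1 q) (q * (q-1) * ((1/2 + t) ^ (q-2) + (1/2 - t) ^ (q-2))) t := by
  have ha : HasDerivAt (fun t : ℝ => 1/2 + t) 1 t := by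
    simpa using (hasDerivAt_id t).const_add (1/2 : ℝ)
  have hb : HasDerivAt (fun t : ℝ => 1/2 - t) (-1) t := by
    simpa using (hasDerivAt_id t).const_sub (1/2 : ℝ)
  have hA := ha.rpow_const (p := q-1) (Or.inl h1.ne')
  have hB := hb.rpow_const (p := q-1) (Or.inl h2.ne')
  have h3 := (hA.sub hB).const_mul q
  show HasDerivAt (fun t : ℝ => q * ((1/2 + t) ^ (q-1) - (1/2 - t) ^ (q-1))) _ t
  refine h3.congr_deriv ?_
  rw [show q - 1 - 1 = q - 2 by ring]; ring

lemma hasDerivAt_psi (q : ℝ) {t : ℝ} (h1 : 0 < 1/2 + t) (h2 : 0 < 1/2 - t) :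
    HasDerivAt (psi q)
      ((q-1) * (t * (q * (q-1) * ((1/2 + t) ^ (q-2) + (1/2 - t) ^ (q-2))) - g1 q t)) t := by
  have hg := hasDerivAt_g q h1 h2
  have hg1 := hasDerivAt_g1 q h1 h2
  have hm : HasDerivAt (fun t : ℝ => t * g1 q t)
      (1 * g1 q t + t * (q * (q-1) * ((1/2 + t) ^ (q-2) + (1/2 - t) ^ (q-2)))) t :=
    (hasDerivAt_id t).mul hg1
  have hs : HasDerivAt (fun t : ℝ => 2 * (g q t - 2 ^ (1-q))) (2 * g1 q t) t :=
    (hg.sub_const _).const_mul 2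
  have h3 := (hm.sub hs).const_mul (q-1)
  show HasDerivAt (fun t : ℝ => (q-1) * (t * g1 q t - 2 * (g q t - 2 ^ (1-q)))) _ t
  refine h3.congr_deriv ?_
  ring

lemma psi_deriv_nonneg {q : ℝ} (hq0 : 0 ≤ q) (hq23 : 0 ≤ (q-2)*(q-3)) {t : ℝ}
    (ht0 : 0 < t) (ht : t < 1/2) :
    0 ≤ (q-1) * (t * (q * (q-1) * ((1/2 + t) ^ (q-2) + (1/2 - t) ^ (q-2))) - g1 q t) := by
  have hB : (0:ℝ) < 1/2 - t := by linarith
  have hA : (0:ℝ) < 1/2 + t := by linarith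
  set B : ℝ := 1/2 - t with hBdef
  set A : ℝ := 1/2 + t with hAdef
  set r : ℝ := A / B with hrdef
  have hrpos : 0 < r := div_pos hA hB
  have hr : 1 ≤ r := (one_le_div hB).2 (by rw [hAdef, hBdef]; linarith)
  have hAr : A = B * r := by rw [hrdef]; field_simp
  have hA2 : A ^ (q-2) = B ^ (q-2) * r ^ (q-2) := by
    rw [hAr, Real.mul_rpow hB.le hrpos.le]
  have hA1 : A ^ (q-1) = B ^ (q-1) * r ^ (q-1) := by
    rw [hAr, Real.mul_rpow hB.le hrpos.le]
  have hB1 : B ^ (q-1) = B ^ (q-2) * B := by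
    rw [show q-1 = (q-2)+1 by ring, Real.rpow_add_one hB.ne']
  have ht' : t = (B * r - B) / 2 := by
    rw [← hAr, hAdef, hBdef]; ring
  have hkey : (q-1) * (t * (q * (q-1) * (A ^ (q-2) + B ^ (q-2))) - g1 q t)
      = (q/2) * B ^ (q-1) * ((q-1) * ((q-1)*(r-1)*(r^(q-2)+1) - 2*(r^(q-1)-1))) := by
    unfold g1
    rw [← hAdef, ← hBdef, hA2, hA1, hB1, ht']
    ring
  rw [hkey]
  have hH := H_nonneg hq23 hr
  have : (0:ℝ) ≤ q/2 := by linarith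
  exact mul_nonneg (mul_nonneg this (Real.rpow_nonneg hB.le _)) hH

lemma psi_nonneg {q : ℝ} (hq0 : 0 ≤ q) (hq23 : 0 ≤ (q-2)*(q-3)) {t : ℝ}
    (ht : t ∈ Ico (0:ℝ) (1/2)) : 0 ≤ psi q t := by
  have hmono : MonotoneOn (psi q) (Ico (0:ℝ) (1/2)) := by
    apply monotoneOn_of_deriv_nonneg (convex_Ico 0 (1/2))
    · intro x hx
      exact (hasDerivAt_psi q (by rcases hx with ⟨h1, h2⟩; linarith)
        (by rcases hx with ⟨h1, h2⟩; linarith)).continuousAt.continuousWithinAt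
    · intro x hx
      rw [interior_Ico] at hx
      exact (hasDerivAt_psi q (by rcases hx with ⟨h1, h2⟩; linarith)
        (by rcases hx with ⟨h1, h2⟩; linarith)).differentiableAt.differentiableWithinAt
    · intro x hx
      rw [interior_Ico] at hx
      rcases hx with ⟨h1, h2⟩
      rw [(hasDerivAt_psi q (by linarith) (by linarith)).deriv]
      exact psi_deriv_nonneg hq0 hq23 h1 h2
  have h0 : psi q 0 = 0 := by
    unfold psi
    rw [g_zero]; ring
  have := hmono (⟨le_rfl, by norm_num⟩ : (0:ℝ) ∈ Ico (0:ℝ) (1/2)) ht ht.1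
  rw [h0] at this
  exact this



lemma Gt_mono {q : ℝ} (hq0 : 0 < q) (hq23 : 0 ≤ (q-2)*(q-3)) :
    MonotoneOn (fun t : ℝ => (q-1) * (g q t - 2 ^ (1-q)) / t^2) (Ioc (0:ℝ) (1/2)) := by
  have hgcont : ContinuousOn (g q) (Ioc (0:ℝ) (1/2)) := by
    intro x hx
    rcases hx with ⟨h1, h2⟩
    apply ContinuousWithinAt.add
    · apply ContinuousAt.continuousWithinAt
      exact (continuousAt_const.add continuousAt_id).rpow_const (Or.inl (by norm_num; linarith))
    · apply ContinuousAt.continuousWithinAt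
      exact (continuousAt_const.sub continuousAt_id).rpow_const (Or.inr hq0.le)
  apply monotoneOn_of_deriv_nonneg (convex_Ioc 0 (1/2))
  · apply ContinuousOn.div
    · exact continuousOn_const.mul (hgcont.sub continuousOn_const)
    · exact (continuousOn_id.pow 2)
    · intro x hx
      exact pow_ne_zero 2 (ne_of_gt hx.1)
  · intro x hx
    rw [interior_Ioc] at hx
    rcases hx with ⟨h1, h2⟩
    have hnum : HasDerivAt (fun t : ℝ => (q-1) * (g q t - 2 ^ (1-q))) ((q-1) * g1 q x) x :=
      ((hasDerivAt_g q (by linarith) (by linarith)).sub_const _).const_mul (q-1)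
    have hden : HasDerivAt (fun t : ℝ => t^2) (2*x) x := by
      simpa using hasDerivAt_pow 2 x
    exact ((hnum.div hden (by positivity)).differentiableAt).differentiableWithinAt
  · intro x hx
    rw [interior_Ioc] at hx
    rcases hx with ⟨h1, h2⟩
    have hnum : HasDerivAt (fun t : ℝ => (q-1) * (g q t - 2 ^ (1-q))) ((q-1) * g1 q x) x :=
      ((hasDerivAt_g q (by linarith) (by linarith)).sub_const _).const_mul (q-1)
    have hden : HasDerivAt (fun t : ℝ => t^2) (2*x) x := by
      simpa using hasDerivAt_pow 2 x
    erw [(hnum.div hden (by positivity)).deriv]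
    have hψ : 0 ≤ psi q x := psi_nonneg hq0.le hq23 ⟨h1.le, h2⟩
    have hq' : (q-1) * g1 q x * x ^ 2 - (q-1) * (g q x - 2 ^ (1-q)) * (2*x) = x * psi q x := by
      unfold psi; ring
    rw [hq']
    positivity
  done

lemma gq_mono {q : ℝ} (hq0 : 0 < q) :
    MonotoneOn (fun t : ℝ => (q-1) * g q t) (Icc (0:ℝ) (1/2)) := by
  apply monotoneOn_of_deriv_nonneg (convex_Icc 0 (1/2))
  · apply continuousOn_const.mul
    intro x hx
    rcases hx with ⟨h1, h2⟩
    apply ContinuousWithinAt.add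
    · apply ContinuousAt.continuousWithinAt
      exact (continuousAt_const.add continuousAt_id).rpow_const (Or.inl (by norm_num; linarith))
    · apply ContinuousAt.continuousWithinAt
      exact (continuousAt_const.sub continuousAt_id).rpow_const (Or.inr hq0.le)
  · intro x hx
    rw [interior_Icc] at hx
    rcases hx with ⟨h1, h2⟩
    exact ((hasDerivAt_g q (by linarith) (by linarith)).const_mul
      (q-1)).differentiableAt.differentiableWithinAt
  · intro x hx
    rw [interior_Icc] at hx
    rcases hx with ⟨h1, h2⟩
    rw [((hasDerivAt_g q (by linarith) (by linarith)).const_mul (q-1)).deriv]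
    have hA : (0:ℝ) < 1/2 + x := by linarith
    have hB : (0:ℝ) < 1/2 - x := by linarith
    have hBA : 1/2 - x ≤ 1/2 + x := by linarith
    unfold g1
    rcases le_or_gt 1 q with hq1 | hq1
    · have := Real.rpow_le_rpow hB.le hBA (by linarith : (0:ℝ) ≤ q - 1)
      have h2' : (0:ℝ) ≤ (1/2+x)^(q-1) - (1/2-x)^(q-1) := by linarith
      have : 0 ≤ q * ((1/2+x)^(q-1) - (1/2-x)^(q-1)) := mul_nonneg hq0.le h2'
      nlinarith
    · have := Real.rpow_le_rpow_of_nonpos hB hBA (by linarith : q - 1 ≤ 0)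
      have h2' : (1/2+x)^(q-1) - (1/2-x)^(q-1) ≤ 0 := by linarith
      nlinarith [mul_nonneg hq0.le (neg_nonneg.2 h2')]

lemma key_abs {q : ℝ} (hq0 : 0 < q) (hq23 : 0 ≤ (q-2)*(q-3)) {s c : ℝ}
    (hs : s ∈ Icc (0:ℝ) (1/2)) (hc : c ∈ Icc (0:ℝ) 1) :
    (q-1) * g q (s*c) ≤ c^2 * ((q-1) * g q s) + (1-c^2) * ((q-1) * 2 ^ (1-q)) := by
  rcases eq_or_lt_of_le hs.1 with hs0 | hs0
  · rw [← hs0, zero_mul, g_zero]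
    exact le_of_eq (by ring)
  rcases eq_or_lt_of_le hc.1 with hc0 | hc0
  · rw [← hc0, mul_zero, g_zero]
    exact le_of_eq (by ring)
  have hsc : s * c ∈ Ioc (0:ℝ) (1/2) :=
    ⟨mul_pos hs0 hc0, le_trans (mul_le_of_le_one_right hs0.le hc.2) hs.2⟩
  have hss : s ∈ Ioc (0:ℝ) (1/2) := ⟨hs0, hs.2⟩
  have hle : s * c ≤ s := mul_le_of_le_one_right hs0.le hc.2
  have hG := Gt_mono hq0 hq23 hsc hss hle
  rw [div_le_div_iff₀ (by positivity) (by positivity)] at hG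
  have hs2 : (0:ℝ) < s^2 := by positivity
  nlinarith [hG]

lemma key' {q : ℝ} (hq0 : 0 < q) (hq23 : 0 ≤ (q-2)*(q-3)) {s c : ℝ}
    (hs : |s| ≤ 1/2) (hc : |c| ≤ 1) :
    (q-1) * g q (s*c) ≤ c^2 * ((q-1) * g q s) + (1-c^2) * ((q-1) * 2 ^ (1-q)) := by
  have h1 : g q (s*c) = g q (|s| * |c|) := by rw [← abs_mul, g_abs]
  have h2 : g q s = g q |s| := (g_abs q s).symm
  have h3 : c^2 = |c|^2 := (sq_abs c).symm
  rw [h1, h2, h3]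
  exact key_abs hq0 hq23 ⟨abs_nonneg s, hs⟩ ⟨abs_nonneg c, hc⟩



lemma f_eq (q lam : ℝ) : lam ^ q + (1 - lam) ^ q = g q (1/2 - lam) := by
  unfold g
  rw [show (1/2 + (1/2 - lam) : ℝ) = 1 - lam by ring,
      show (1/2 - (1/2 - lam) : ℝ) = lam by ring]
  ring

lemma per_angle {q : ℝ} (hq0 : 0 < q) (hq1 : q ≠ 1) (hq23 : 0 ≤ (q-2)*(q-3))
    {lam : ℝ} (hlam : lam ∈ Icc (0:ℝ) 1) (θ : ℝ) :
    (lam ^ q + (1 - lam) ^ q - 2 ^ (1-q)) / (q-1) * Real.sin (2*θ) ^ 2 ≤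
      tq q (lam * Real.sin θ ^ 2 + (1 - lam) * Real.cos θ ^ 2) - tq q lam := by
  have hq1' : q - 1 ≠ 0 := sub_ne_zero.2 hq1
  set a : ℝ := 1/2 - lam with hadef
  set c : ℝ := Real.cos (2*θ) with hcdef
  have hmu : lam * Real.sin θ ^ 2 + (1 - lam) * Real.cos θ ^ 2 = 1/2 + a * c := by
    rw [hcdef, Real.cos_two_mul, hadef]
    linear_combination lam * (Real.sin_sq_add_cos_sq θ)
  have htqmu : tq q (lam * Real.sin θ ^ 2 + (1 - lam) * Real.cos θ ^ 2)
      = (1 - g q (a * c)) / (q-1) := by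
    rw [hmu]
    unfold tq g
    rw [show (1 - (1/2 + a*c) : ℝ) = 1/2 - a*c by ring]
    ring_nf
  have htql : tq q lam = (1 - g q a) / (q-1) := by
    unfold tq
    rw [show (1:ℝ) - lam ^ q - (1-lam) ^ q = 1 - (lam ^ q + (1-lam) ^ q) by ring,
        f_eq q lam]
  have hsin : Real.sin (2*θ) ^ 2 = 1 - c^2 := by
    rw [hcdef, Real.sin_sq]
  have hkey := key' hq0 hq23 (s := a) (c := c)
    (abs_le.2 ⟨by rw [hadef]; rcases hlam with ⟨h1, h2⟩; linarith,
               by rw [hadef]; rcases hlam with ⟨h1, h2⟩; linarith⟩)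
    (by rw [hcdef]; exact Real.abs_cos_le_one (2*θ))
  rw [htqmu, htql, hsin, f_eq q lam, ← hadef]
  rw [← sub_nonneg]
  have hrepr : (1 - g q (a*c)) / (q-1) - (1 - g q a) / (q-1)
        - (g q a - 2^(1-q)) / (q-1) * (1 - c^2)
      = (c^2 * ((q-1) * g q a) + (1-c^2) * ((q-1) * 2^(1-q)) - (q-1) * g q (a*c))
        / (q-1)^2 := by
    field_simp
    ring
  rw [hrepr]
  exact div_nonneg (by linarith) (sq_nonneg _)

end TsallisAux

end TsallisAuxSection

open TsallisAux Set in
theorem tsallis_state_dependent_bound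
    (q : ℝ) (hq : q ∈ Set.Icc (0:ℝ) 2 ∪ Set.Ici (3:ℝ)) (hq1 : q ≠ 1)
    (lam : ℝ) (hlam : lam ∈ Set.Icc (0:ℝ) 1)
    (ε : ℝ) (hε : ε ∈ Set.Icc (0:ℝ) (π/2))
    (θ : ℝ) :
    tq q (lam * Real.sin θ ^ 2 + (1 - lam) * Real.cos θ ^ 2)
      + tq q (lam * Real.sin (θ + ε) ^ 2 + (1 - lam) * Real.cos (θ + ε) ^ 2)
      - 2 * tq q lam ≥
      ((lam ^ q + (1 - lam) ^ q - 2 ^ (1 - q)) / (lam ^ q + (1 - lam) ^ q + q - 2))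
        * (1 - tq q lam)
        * (Real.sin (2*θ + 2*ε) ^ 2 + Real.sin (2*θ) ^ 2) := by
  have hq0' : 0 ≤ q := by rcases hq with ⟨h1, _⟩ | h3; exacts [h1, by linarith [mem_Ici.1 h3]]
  rcases eq_or_ne q 0 with h0 | h0
  · subst h0
    norm_num [tq, Real.rpow_zero, Real.rpow_one]
  have hq0 : 0 < q := lt_of_le_of_ne hq0' (Ne.symm h0)
  have hq1' : q - 1 ≠ 0 := sub_ne_zero.2 hq1
  have hq23 : 0 ≤ (q-2)*(q-3) := by
    rcases hq with ⟨h1, h2⟩ | h3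
    · nlinarith
    · have := mem_Ici.1 h3; nlinarith
  have hP1 := per_angle hq0 hq1 hq23 hlam θ
  have hP2 := per_angle hq0 hq1 hq23 hlam (θ + ε)
  rw [show 2*θ + 2*ε = 2*(θ+ε) by ring]
  have hM : 0 ≤ (lam ^ q + (1 - lam) ^ q - 2 ^ (1-q)) / (q-1) := by
    have ha : |1/2 - lam| ∈ Icc (0:ℝ) (1/2) :=
      ⟨abs_nonneg _, abs_le.2 ⟨by rcases hlam with ⟨h1, h2⟩; linarith,
        by rcases hlam with ⟨h1, h2⟩; linarith⟩ ⟩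
    have h0m : (0:ℝ) ∈ Icc (0:ℝ) (1/2) := ⟨le_rfl, by norm_num⟩
    have hmono0 : (q-1) * g q 0 ≤ (q-1) * g q |1/2 - lam| := gq_mono hq0 h0m ha (abs_nonneg _)
    rw [g_zero, g_abs, ← f_eq q lam] at hmono0
    have : 0 ≤ (q-1) * (lam ^ q + (1 - lam) ^ q) - (q-1) * 2^(1-q) := by linarith
    have hrepr : (lam ^ q + (1 - lam) ^ q - 2 ^ (1-q)) / (q-1)
        = ((q-1) * (lam ^ q + (1 - lam) ^ q) - (q-1) * 2^(1-q)) / (q-1)^2 := by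
      field_simp
    rw [hrepr]
    exact div_nonneg this (sq_nonneg _)
  set f : ℝ := lam ^ q + (1 - lam) ^ q with hf
  by_cases hd : f + q - 2 = 0
  · rw [show f + q - 2 = 0 from hd, div_zero, zero_mul, zero_mul, ge_iff_le]
    nlinarith [mul_nonneg hM (sq_nonneg (Real.sin (2*(θ+ε)))),
      mul_nonneg hM (sq_nonneg (Real.sin (2*θ)))]
  · have h1t : 1 - tq q lam = (f + q - 2)/(q-1) := by
      rw [hf]; unfold tq; field_simp; ring
    have hco : (f - 2^(1-q)) / (f + q - 2) * (1 - tq q lam) = (f - 2^(1-q))/(q-1) := by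
      rw [h1t]
      field_simp
    rw [hco, ge_iff_le]
    nlinarith [hP1, hP2]
end

section
/- Let λ ∈ [0,1], ε ∈ [0, π/2], θ ∈ ℝ, and let c = cos ε if ε ≤ π/4 and c = sin ε if ε > π/4. Set μ_X(θ) = λ sin²θ + (1-λ)cos²θ and μ_Y(θ) = λ sin²(θ+ε) + (1-λ)cos²(θ+ε). Then h(μ_X(θ)) + h(μ_Y(θ)) - 2h(λ) ≥ 2 (ln 2 - h(λ)) (1 - c²), where h is the binary entropy in natural logarithm. (This is the Shannon/von Neumann q → 1 case of the main uncertainty relation, the bound B_KPP.) -/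
open Real

/-- Auxiliary function: `ψ(y) = log 2 - binEnt((1-y)/2)`. -/
noncomputable def psiAux (y : ℝ) : ℝ :=
  ((1 + y) * Real.log (1 + y) + (1 - y) * Real.log (1 - y)) / 2

lemma psiAux_one : psiAux 1 = Real.log 2 := by
  unfold psiAux
  rw [show (1:ℝ) + 1 = 2 by norm_num]
  simp [Real.log_zero]

lemma psiAux_neg (y : ℝ) : psiAux (-y) = psiAux y := by
  unfold psiAux; ring_nf

lemma psiAux_continuous : Continuous psiAux := by
  have h := Real.continuous_mul_log
  have h1 : Continuous fun y : ℝ => (1 + y) * Real.log (1 + y) :=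
    h.comp (continuous_const.add continuous_id)
  have h2 : Continuous fun y : ℝ => (1 - y) * Real.log (1 - y) :=
    h.comp (continuous_const.sub continuous_id)
  exact (h1.add h2).div_const 2

/-- Power series of `psiAux` for `|y| < 1`. -/
lemma psiAux_hasSum {y : ℝ} (h : |y| < 1) :
    HasSum (fun k : ℕ => y ^ (2 * k + 2) / ((2 * k + 1) * (2 * k + 2))) (psiAux y) := by
  have hy' : |(-y)| < 1 := by rwa [abs_neg]
  have h1 := Real.hasSum_pow_div_log_of_abs_lt_one h
  have h2 := Real.hasSum_pow_div_log_of_abs_lt_one hy'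
  -- g n = -(1-y) * y^(n+1)/(n+1) + (-(1+y)) * (-y)^(n+1)/(n+1)
  set g : ℕ → ℝ := fun n =>
    -(1 - y) * (y ^ (n + 1) / (n + 1)) + -(1 + y) * ((-y) ^ (n + 1) / (n + 1)) with hg_def
  have hg : HasSum g (2 * psiAux y) := by
    have := (h1.mul_left (-(1 - y))).add (h2.mul_left (-(1 + y)))
    have heq : -(1 - y) * -Real.log (1 - y) + -(1 + y) * -Real.log (1 - -y) = 2 * psiAux y := by
      simp only [psiAux, sub_neg_eq_add]
      ring
    rwa [heq] at this
  have hsum : Summable g := hg.summable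
  have hse : Summable fun k => g (2 * k) :=
    hsum.comp_injective (fun a b hab => by omega)
  have hso : Summable fun k => g (2 * k + 1) :=
    hsum.comp_injective (fun a b hab => by omega)
  have he := hse.hasSum
  have ho := hso.hasSum
  have htot := he.even_add_odd ho
  have hval : (∑' k, g (2 * k)) + ∑' k, g (2 * k + 1) = 2 * psiAux y := htot.unique hg
  have hpair : HasSum (fun k => g (2 * k) + g (2 * k + 1)) (2 * psiAux y) := by
    rw [← hval]; exact he.add ho
  have hterm : ∀ k : ℕ, g (2 * k) + g (2 * k + 1)
      = 2 * (y ^ (2 * k + 2) / ((2 * k + 1) * (2 * k + 2))) := by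
    intro k
    have hodd : (-y) ^ (2 * k + 1) = -(y ^ (2 * k + 1)) :=
      Odd.neg_pow ⟨k, by ring⟩ y
    have heven : (-y) ^ (2 * k + 2) = y ^ (2 * k + 2) :=
      Even.neg_pow ⟨k + 1, by ring⟩ y
    have c1 : ((2 * k : ℕ) : ℝ) + 1 = (2 * k + 1 : ℝ) := by push_cast; ring
    have c2 : ((2 * k + 1 : ℕ) : ℝ) + 1 = (2 * k + 2 : ℝ) := by push_cast; ring
    have e1 : (2 * k : ℕ) + 1 = 2 * k + 1 := rfl
    have e2 : (2 * k + 1 : ℕ) + 1 = 2 * k + 2 := rfl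
    simp only [hg_def, e1, e2, c1, c2, hodd, heven]
    have hp1 : (0:ℝ) < 2 * k + 1 := by positivity
    have hp2 : (0:ℝ) < 2 * k + 2 := by positivity
    field_simp
    ring
  have : HasSum (fun k : ℕ => 2 * (y ^ (2 * k + 2) / ((2 * k + 1) * (2 * k + 2))))
      (2 * psiAux y) := by
    rwa [funext hterm] at hpair
  have h2ne : (2:ℝ) ≠ 0 := two_ne_zero
  have := this.div_const 2
  simpa [mul_div_assoc, mul_div_cancel_left₀ _ h2ne] using this

lemma psiAux_neg_one : psiAux (-1) = Real.log 2 := by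
  rw [psiAux_neg, psiAux_one]

lemma psiAux_nonneg {y : ℝ} (h : |y| ≤ 1) : 0 ≤ psiAux y := by
  rcases lt_or_eq_of_le h with h' | h'
  · have hs := psiAux_hasSum h'
    refine hasSum_le (fun k => ?_) hasSum_zero hs
    have hnum : (0:ℝ) ≤ y ^ (2 * k + 2) := by
      have he : y ^ (2 * k + 2) = (y ^ (k + 1)) ^ 2 := by ring
      rw [he]; positivity
    positivity
  · rcases (abs_eq (by norm_num : (0:ℝ) ≤ 1)).mp h' with rfl | rfl
    · rw [psiAux_one]; positivity
    · rw [psiAux_neg_one]; positivity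

/-- Key comparison: if `z² = a y²` with `0 ≤ a ≤ 1`, `|y| < 1`, then `ψ(z) ≤ a ψ(y)`. -/
lemma psiAux_key_lt {y z a : ℝ} (hy : |y| < 1) (ha0 : 0 ≤ a) (ha1 : a ≤ 1)
    (hz : z ^ 2 = a * y ^ 2) : psiAux z ≤ a * psiAux y := by
  have hz1 : |z| < 1 := by
    have hsq : z ^ 2 < 1 := by nlinarith [sq_abs y, abs_nonneg y]
    nlinarith [sq_abs z, abs_nonneg z]
  have hsz := psiAux_hasSum hz1
  have hsy := (psiAux_hasSum hy).mul_left a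
  refine hasSum_le (fun k => ?_) hsz hsy
  have hden : (0:ℝ) < ((2 * k + 1) * (2 * k + 2) : ℝ) := by positivity
  have hnum : z ^ (2 * k + 2) ≤ a * y ^ (2 * k + 2) := by
    have hzp : z ^ (2 * k + 2) = (z ^ 2) ^ (k + 1) := by ring
    have hyp : y ^ (2 * k + 2) = (y ^ 2) ^ (k + 1) := by ring
    rw [hzp, hyp, hz, mul_pow]
    have hak : a ^ (k + 1) ≤ a := by
      calc a ^ (k + 1) ≤ a ^ 1 := pow_le_pow_of_le_one ha0 ha1 (by omega)
      _ = a := pow_one a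
    have hy2 : (0:ℝ) ≤ (y ^ 2) ^ (k + 1) := by positivity
    nlinarith
  calc z ^ (2 * k + 2) / ((2 * (k:ℝ) + 1) * (2 * (k:ℝ) + 2))
      ≤ (a * y ^ (2 * k + 2)) / ((2 * (k:ℝ) + 1) * (2 * (k:ℝ) + 2)) := by gcongr
    _ = a * (y ^ (2 * k + 2) / ((2 * (k:ℝ) + 1) * (2 * (k:ℝ) + 2))) := by ring

lemma psiAux_le_sq {z : ℝ} (hz : |z| ≤ 1) : psiAux z ≤ z ^ 2 * Real.log 2 := by
  rcases lt_or_eq_of_le hz with hz' | hz'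
  · -- limit argument as y → 1⁻
    have hc : ContinuousAt (fun y : ℝ => z ^ 2 / y ^ 2 * psiAux y) 1 := by
      have h1 : ContinuousAt (fun y : ℝ => z ^ 2 / y ^ 2) 1 :=
        continuousAt_const.div ((continuous_pow 2).continuousAt) (by norm_num)
      exact h1.mul psiAux_continuous.continuousAt
    have hlim0 : Filter.Tendsto (fun y : ℝ => z ^ 2 / y ^ 2 * psiAux y)
        (nhdsWithin 1 (Set.Iio 1))
        (nhds ((fun y : ℝ => z ^ 2 / y ^ 2 * psiAux y) 1)) :=
      hc.continuousWithinAt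
    have hval : (fun y : ℝ => z ^ 2 / y ^ 2 * psiAux y) 1 = z ^ 2 * Real.log 2 := by
      simp [psiAux_one]
    have hlim : Filter.Tendsto (fun y : ℝ => z ^ 2 / y ^ 2 * psiAux y)
        (nhdsWithin 1 (Set.Iio 1)) (nhds (z ^ 2 * Real.log 2)) := hval ▸ hlim0
    refine ge_of_tendsto hlim ?_
    have hmem : Set.Ioo |z| 1 ∈ nhdsWithin (1:ℝ) (Set.Iio 1) :=
      Ioo_mem_nhdsLT_of_mem ⟨hz', le_refl 1⟩
    filter_upwards [hmem] with y hy
    have hy0 : 0 < y := lt_of_le_of_lt (abs_nonneg z) hy.1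
    have hy2 : (0:ℝ) < y ^ 2 := by positivity
    have ha1 : z ^ 2 / y ^ 2 ≤ 1 := by
      rw [div_le_one hy2]
      have := hy.1
      nlinarith [abs_nonneg z, sq_abs z, sq_abs y, abs_of_pos hy0]
    have ha0 : 0 ≤ z ^ 2 / y ^ 2 := by positivity
    have hzz : z ^ 2 = (z ^ 2 / y ^ 2) * y ^ 2 := by field_simp
    exact psiAux_key_lt (by rw [abs_of_pos hy0]; exact hy.2) ha0 ha1 hzz
  · rcases (abs_eq (by norm_num : (0:ℝ) ≤ 1)).mp hz' with rfl | rfl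
    · rw [psiAux_one]; norm_num
    · rw [psiAux_neg_one]; norm_num

/-- Master lemma: `z² = a y²`, `0 ≤ a ≤ 1`, `|y| ≤ 1` imply `ψ(z) ≤ a ψ(y)`. -/
lemma psiAux_key {y z a : ℝ} (hy : |y| ≤ 1) (ha0 : 0 ≤ a) (ha1 : a ≤ 1)
    (hz : z ^ 2 = a * y ^ 2) : psiAux z ≤ a * psiAux y := by
  rcases lt_or_eq_of_le hy with hy' | hy'
  · exact psiAux_key_lt hy' ha0 ha1 hz
  · have hyy : y ^ 2 = 1 := by rw [← sq_abs, hy']; norm_num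
    have hpy : psiAux y = Real.log 2 := by
      rcases (abs_eq (by norm_num : (0:ℝ) ≤ 1)).mp hy' with rfl | rfl
      · exact psiAux_one
      · exact psiAux_neg_one
    have hz2 : z ^ 2 = a := by rw [hz, hyy, mul_one]
    have hzle : |z| ≤ 1 := by
      rw [← sq_abs] at hz2
      nlinarith [abs_nonneg z]
    calc psiAux z ≤ z ^ 2 * Real.log 2 := psiAux_le_sq hzle
    _ = a * psiAux y := by rw [hz2, hpy]

/-- Relation between `binEnt` and `psiAux`. -/
lemma binEnt_eq_psiAux {p : ℝ} (h0 : 0 ≤ p) (h1 : p ≤ 1) :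
    binEnt p = Real.log 2 - psiAux (1 - 2 * p) := by
  rcases eq_or_lt_of_le h0 with rfl | h0'
  · rw [show (1:ℝ) - 2 * 0 = 1 by norm_num, psiAux_one]
    simp [binEnt]
  rcases eq_or_lt_of_le h1 with rfl | h1'
  · rw [show (1:ℝ) - 2 * 1 = -1 by norm_num, psiAux_neg_one]
    simp [binEnt]
  · have e1 : 1 + (1 - 2 * p) = 2 * (1 - p) := by ring
    have e2 : 1 - (1 - 2 * p) = 2 * p := by ring
    have l1 : Real.log (2 * (1 - p)) = Real.log 2 + Real.log (1 - p) :=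
      Real.log_mul two_ne_zero (by linarith)
    have l2 : Real.log (2 * p) = Real.log 2 + Real.log p :=
      Real.log_mul two_ne_zero (by linarith)
    rw [binEnt, psiAux, e1, e2, l1, l2]
    ring

theorem shannon_conditional_uncertainty_BKPP
    (lam : ℝ) (hlam : lam ∈ Set.Icc (0:ℝ) 1)
    (ε : ℝ) (hε : ε ∈ Set.Icc (0:ℝ) (π/2))
    (θ : ℝ)
    (c : ℝ) (hc : c = if ε ≤ π/4 then Real.cos ε else Real.sin ε) :
    binEnt (lam * Real.sin θ ^ 2 + (1 - lam) * Real.cos θ ^ 2)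
      + binEnt (lam * Real.sin (θ + ε) ^ 2 + (1 - lam) * Real.cos (θ + ε) ^ 2)
      - 2 * binEnt lam ≥
      2 * (Real.log 2 - binEnt lam) * (1 - c ^ 2) := by
  obtain ⟨hl0, hl1⟩ := hlam
  obtain ⟨he0, he1⟩ := hε
  set y : ℝ := 1 - 2 * lam with hy_def
  have hy : |y| ≤ 1 := by rw [abs_le]; constructor <;> [linarith; linarith]
  -- the two measurement probabilities
  set μX : ℝ := lam * Real.sin θ ^ 2 + (1 - lam) * Real.cos θ ^ 2 with hμX_def
  set μY : ℝ := lam * Real.sin (θ + ε) ^ 2 + (1 - lam) * Real.cos (θ + ε) ^ 2 with hμY_def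
  have sc : ∀ x : ℝ, Real.sin x ^ 2 = 1 - Real.cos x ^ 2 := fun x => Real.sin_sq x
  have cc : ∀ x : ℝ, Real.cos x ^ 2 = 1 / 2 + Real.cos (2 * x) / 2 := fun x => Real.cos_sq x
  have hX : 1 - 2 * μX = -(y * Real.cos (2 * θ)) := by
    rw [hμX_def, sc θ, cc θ]; ring
  have hY : 1 - 2 * μY = -(y * Real.cos (2 * (θ + ε))) := by
    rw [hμY_def, sc (θ + ε), cc (θ + ε)]; ring
  have hXmem : 0 ≤ μX ∧ μX ≤ 1 := by
    constructor <;>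
      nlinarith [Real.sin_sq_add_cos_sq θ, sq_nonneg (Real.sin θ), sq_nonneg (Real.cos θ)]
  have hYmem : 0 ≤ μY ∧ μY ≤ 1 := by
    constructor <;>
      nlinarith [Real.sin_sq_add_cos_sq (θ + ε), sq_nonneg (Real.sin (θ + ε)),
        sq_nonneg (Real.cos (θ + ε))]
  have hbX : binEnt μX = Real.log 2 - psiAux (y * Real.cos (2 * θ)) := by
    rw [binEnt_eq_psiAux hXmem.1 hXmem.2, hX, psiAux_neg]
  have hbY : binEnt μY = Real.log 2 - psiAux (y * Real.cos (2 * (θ + ε))) := by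
    rw [binEnt_eq_psiAux hYmem.1 hYmem.2, hY, psiAux_neg]
  have hbL : binEnt lam = Real.log 2 - psiAux y := by
    rw [binEnt_eq_psiAux hl0 hl1]
  -- key bounds
  have hkX : psiAux (y * Real.cos (2 * θ)) ≤ Real.cos (2 * θ) ^ 2 * psiAux y :=
    psiAux_key hy (sq_nonneg _) (Real.cos_sq_le_one _) (by ring)
  have hkY : psiAux (y * Real.cos (2 * (θ + ε))) ≤ Real.cos (2 * (θ + ε)) ^ 2 * psiAux y :=
    psiAux_key hy (sq_nonneg _) (Real.cos_sq_le_one _) (by ring)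
  -- trigonometric bound
  have htrig : Real.cos (2 * θ) ^ 2 + Real.cos (2 * (θ + ε)) ^ 2 ≤ 2 * c ^ 2 := by
    have e1 := cc (2 * θ)
    have e2 := cc (2 * (θ + ε))
    have hsum : Real.cos (2 * (2 * θ)) + Real.cos (2 * (2 * (θ + ε)))
        = 2 * Real.cos (4 * θ + 2 * ε) * Real.cos (2 * ε) := by
      rw [Real.cos_add_cos,
        show (2 * (2 * θ) + 2 * (2 * (θ + ε))) / 2 = 4 * θ + 2 * ε by ring,
        show (2 * (2 * θ) - 2 * (2 * (θ + ε))) / 2 = -(2 * ε) by ring,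
        Real.cos_neg]
    have habs : Real.cos (4 * θ + 2 * ε) * Real.cos (2 * ε) ≤ |Real.cos (2 * ε)| := by
      calc Real.cos (4 * θ + 2 * ε) * Real.cos (2 * ε)
          ≤ |Real.cos (4 * θ + 2 * ε) * Real.cos (2 * ε)| := le_abs_self _
        _ = |Real.cos (4 * θ + 2 * ε)| * |Real.cos (2 * ε)| := abs_mul _ _
        _ ≤ 1 * |Real.cos (2 * ε)| := by
            gcongr; exact Real.abs_cos_le_one _
        _ = |Real.cos (2 * ε)| := one_mul _
    have hc2 : 2 * c ^ 2 = 1 + |Real.cos (2 * ε)| := by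
      rcases le_or_gt ε (π/4) with hle | hgt
      · rw [hc, if_pos hle]
        have hnn : 0 ≤ Real.cos (2 * ε) := by
          apply Real.cos_nonneg_of_mem_Icc
          constructor <;> [linarith [Real.pi_pos]; linarith]
        rw [abs_of_nonneg hnn, cc ε]; ring
      · rw [hc, if_neg (not_le.mpr hgt)]
        have hnp : Real.cos (2 * ε) ≤ 0 := by
          apply Real.cos_nonpos_of_pi_div_two_le_of_le <;> linarith [Real.pi_pos]
        rw [abs_of_nonpos hnp, sc ε, cc ε]; ring
    rw [e1, e2, hc2]
    have : Real.cos (2 * (2 * θ)) + Real.cos (2 * (2 * (θ + ε)))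
        = 2 * (Real.cos (4 * θ + 2 * ε) * Real.cos (2 * ε)) := by
      rw [hsum]; ring
    linarith
  have hpy : 0 ≤ psiAux y := psiAux_nonneg hy
  rw [hbX, hbY, hbL, ge_iff_le]
  nlinarith [mul_le_mul_of_nonneg_right htrig hpy]
end

section
/- Let λ ∈ [0,1], ε ∈ [0, π/2], and θ ∈ ℝ. Set μ_X(θ) = λ sin²θ + (1-λ)cos²θ and μ_Y(θ) = λ sin²(θ+ε) + (1-λ)cos²(θ+ε). Then h(μ_X(θ)) + h(μ_Y(θ)) - 2h(λ) ≥ (ln 2 - h(λ)) (sin²(2θ + 2ε) + sin²(2θ)). (This is the state-dependent Shannon entropic uncertainty bound B(θ).) -/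
open Real

lemma binEnt_eq_s7 (x : ℝ) : binEnt x = Real.binEntropy x := by
  simp [binEnt, Real.binEntropy, Real.log_inv]; ring

/-- auxiliary function: `F v = log 2 - h(1/2 + √v)`. -/
noncomputable def auxF (v : ℝ) : ℝ := Real.log 2 - Real.binEntropy (1/2 + Real.sqrt v)

lemma log_ratio_le (y : ℝ) (hy : y ∈ Set.Ico (0:ℝ) 1) :
    Real.log (1+y) - Real.log (1-y) ≤ 2*y/(1-y^2) := by
  set g : ℝ → ℝ := fun y => 2*y/(1-y^2) - (Real.log (1+y) - Real.log (1-y)) with hg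
  have hder : ∀ z ∈ Set.Ico (0:ℝ) 1, HasDerivAt g
      ((2*(1-z^2) + 4*z^2)/(1-z^2)^2 - (1/(1+z) + 1/(1-z))) z := by
    intro z hz
    have h1 : (0:ℝ) < 1 + z := by linarith [hz.1]
    have h2 : (0:ℝ) < 1 - z := by linarith [hz.2]
    have h3 : (1:ℝ) - z^2 ≠ 0 := by nlinarith
    have d1 : HasDerivAt (fun y : ℝ => 2*y/(1-y^2))
        ((2*(1-z^2) + 4*z^2)/(1-z^2)^2) z := by
      have h := ((hasDerivAt_id' (x := z)).const_mul 2).div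
        ((hasDerivAt_pow 2 z).const_sub 1) h3
      refine h.congr_deriv ?_
      push_cast
      ring
    have d2 : HasDerivAt (fun y : ℝ => Real.log (1+y)) (1/(1+z)) z := by
      simpa using ((hasDerivAt_id' (x := z)).const_add 1).log (ne_of_gt h1)
    have d3 : HasDerivAt (fun y : ℝ => Real.log (1-y)) (-(1/(1-z))) z := by
      have h := ((hasDerivAt_id' (x := z)).const_sub 1).log (ne_of_gt h2)
      convert h using 1
      field_simp
    have := d1.sub (d2.sub d3)
    refine this.congr_deriv ?_
    ring
  have hmono : MonotoneOn g (Set.Ico (0:ℝ) 1) := by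
    apply monotoneOn_of_deriv_nonneg (convex_Ico 0 1)
    · intro z hz
      exact (hder z hz).continuousAt.continuousWithinAt
    · rw [interior_Ico]
      intro z hz
      exact ((hder z ⟨le_of_lt hz.1, hz.2⟩).differentiableAt).differentiableWithinAt
    · rw [interior_Ico]
      intro z hz
      rw [(hder z ⟨le_of_lt hz.1, hz.2⟩).deriv]
      have h1 : (0:ℝ) < 1 + z := by linarith [hz.1]
      have h2 : (0:ℝ) < 1 - z := by linarith [hz.2]
      have h3 : (0:ℝ) < 1 - z^2 := by nlinarith
      have n1 : (1:ℝ)+z ≠ 0 := ne_of_gt h1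
      have n2 : (1:ℝ)-z ≠ 0 := ne_of_gt h2
      have n3 : (1:ℝ)-z^2 ≠ 0 := ne_of_gt h3
      have he : (2*(1-z^2) + 4*z^2)/(1-z^2)^2 - (1/(1+z) + 1/(1-z))
          = 4*z^2/(1-z^2)^2 := by
        field_simp
        ring
      rw [he]
      positivity
  have h0 : g 0 = 0 := by simp [hg]
  have := hmono (Set.left_mem_Ico.2 one_pos) hy hy.1
  rw [h0] at this
  simpa [hg, sub_nonneg] using this

lemma qmono : MonotoneOn (fun y : ℝ => (Real.log (1+y) - Real.log (1-y))/y)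
    (Set.Ioo (0:ℝ) 1) := by
  have hder : ∀ z ∈ Set.Ioo (0:ℝ) 1,
      HasDerivAt (fun y : ℝ => (Real.log (1+y) - Real.log (1-y))/y)
      (((1/(1+z) + 1/(1-z)) * z - (Real.log (1+z) - Real.log (1-z)) * 1) / z^2) z := by
    intro z hz
    have h1 : (0:ℝ) < 1 + z := by linarith [hz.1]
    have h2 : (0:ℝ) < 1 - z := by linarith [hz.2]
    have d2 : HasDerivAt (fun y : ℝ => Real.log (1+y)) (1/(1+z)) z := by
      simpa using ((hasDerivAt_id' (x := z)).const_add 1).log (ne_of_gt h1)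
    have d3 : HasDerivAt (fun y : ℝ => Real.log (1-y)) (-(1/(1-z))) z := by
      have h := ((hasDerivAt_id' (x := z)).const_sub 1).log (ne_of_gt h2)
      convert h using 1
      field_simp
    have := (d2.sub d3).div (hasDerivAt_id' (x := z)) (ne_of_gt hz.1)
    refine this.congr_deriv ?_
    simp only [Pi.sub_apply]
    ring
  apply monotoneOn_of_deriv_nonneg (convex_Ioo 0 1)
  · intro z hz
    exact (hder z hz).continuousAt.continuousWithinAt
  all_goals rw [interior_Ioo]
  · intro z hz
    exact ((hder z hz).differentiableAt).differentiableWithinAt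
  · intro z hz
    rw [(hder z hz).deriv]
    have h1 : (0:ℝ) < 1 + z := by linarith [hz.1]
    have h2 : (0:ℝ) < 1 - z := by linarith [hz.2]
    have h3 : (0:ℝ) < 1 - z^2 := by nlinarith
    apply div_nonneg _ (sq_nonneg z)
    have hL : Real.log (1+z) - Real.log (1-z) ≤ 2*z/(1-z^2) :=
      log_ratio_le z ⟨le_of_lt hz.1, hz.2⟩
    have n1 : (1:ℝ)+z ≠ 0 := ne_of_gt h1
    have n2 : (1:ℝ)-z ≠ 0 := ne_of_gt h2
    have n3 : (1:ℝ)-z^2 ≠ 0 := ne_of_gt h3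
    have he : (1/(1+z) + 1/(1-z)) * z = 2*z/(1-z^2) := by
      field_simp
      ring
    rw [he]
    linarith

lemma auxF_hasDeriv (v : ℝ) (hv : v ∈ Set.Ioo (0:ℝ) (1/4)) :
    HasDerivAt auxF
      ((Real.log (1+2*Real.sqrt v) - Real.log (1-2*Real.sqrt v))/(2*Real.sqrt v)) v := by
  have hs0 : 0 < Real.sqrt v := Real.sqrt_pos.2 hv.1
  have hs : Real.sqrt v < 1/2 := by
    have := Real.sqrt_lt_sqrt (le_of_lt hv.1) hv.2
    rwa [show (1:ℝ)/4 = (1/2)^2 by norm_num, Real.sqrt_sq (by norm_num)] at this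
  have h0 : (1:ℝ)/2 + Real.sqrt v ≠ 0 := by positivity
  have h1 : (1:ℝ)/2 + Real.sqrt v ≠ 1 := by intro h; linarith [hs, h]
  have hd := (Real.hasDerivAt_binEntropy h0 h1).comp v
    ((Real.hasDerivAt_sqrt (ne_of_gt hv.1)).const_add (1/2))
  have hF := hd.const_sub (Real.log 2)
  have l1 : Real.log (1 - (1/2 + Real.sqrt v)) = Real.log (1-2*Real.sqrt v) - Real.log 2 := by
    rw [show (1:ℝ) - (1/2 + Real.sqrt v) = (1-2*Real.sqrt v)/2 by ring,
      Real.log_div (by linarith) two_ne_zero]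
  have l2 : Real.log ((1:ℝ)/2 + Real.sqrt v) = Real.log (1+2*Real.sqrt v) - Real.log 2 := by
    rw [show (1:ℝ)/2 + Real.sqrt v = (1+2*Real.sqrt v)/2 by ring,
      Real.log_div (by linarith) two_ne_zero]
  have : auxF = fun v => Real.log 2 - Real.binEntropy (1/2 + Real.sqrt v) := rfl
  refine hF.congr_deriv ?_
  rw [l1, l2]
  field_simp
  ring

lemma auxF_convex : ConvexOn ℝ (Set.Icc (0:ℝ) (1/4)) auxF := by
  apply MonotoneOn.convexOn_of_deriv (convex_Icc _ _)
  · exact (continuous_const.sub (Real.binEntropy_continuous.comp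
      (continuous_const.add Real.continuous_sqrt))).continuousOn
  · rw [interior_Icc]
    intro v hv
    exact ((auxF_hasDeriv v hv).differentiableAt).differentiableWithinAt
  · rw [interior_Icc]
    intro a ha b hb hab
    rw [(auxF_hasDeriv a ha).deriv, (auxF_hasDeriv b hb).deriv]
    have sq_lt : ∀ w : ℝ, w ∈ Set.Ioo (0:ℝ) (1/4) → 2*Real.sqrt w ∈ Set.Ioo (0:ℝ) 1 := by
      intro w hw
      have hs0 : 0 < Real.sqrt w := Real.sqrt_pos.2 hw.1
      have hs : Real.sqrt w < 1/2 := by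
        have := Real.sqrt_lt_sqrt (le_of_lt hw.1) hw.2
        rwa [show (1:ℝ)/4 = (1/2)^2 by norm_num, Real.sqrt_sq (by norm_num)] at this
      exact ⟨by linarith, by linarith⟩
    have := qmono (sq_lt a ha) (sq_lt b hb)
      (by have := Real.sqrt_le_sqrt hab; linarith)
    simpa using this

lemma keyIneq (s : ℝ) (hs : s ∈ Set.Icc (0:ℝ) (1/2)) (c : ℝ) (hc : c ∈ Set.Icc (0:ℝ) 1) :
    Real.log 2 - Real.binEntropy (1/2 + c*s) ≤ c^2 * (Real.log 2 - Real.binEntropy (1/2 + s)) := by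
  have hF0 : auxF 0 = 0 := by
    simp [auxF, Real.sqrt_zero, show (1:ℝ)/2 = 2⁻¹ by norm_num, Real.binEntropy_two_inv]
  have hw : s^2 ∈ Set.Icc (0:ℝ) (1/4) := ⟨sq_nonneg s, by nlinarith [hs.1, hs.2]⟩
  have h0m : (0:ℝ) ∈ Set.Icc (0:ℝ) (1/4) := by norm_num
  have hc2 : (0:ℝ) ≤ c^2 := sq_nonneg c
  have hc2' : (0:ℝ) ≤ 1 - c^2 := by nlinarith [hc.1, hc.2]
  have := auxF_convex.2 h0m hw hc2' hc2 (by ring)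
  simp only [smul_eq_mul, mul_zero, zero_add, hF0, mul_zero, add_zero] at this
  have heq : auxF (c^2 * s^2) = Real.log 2 - Real.binEntropy (1/2 + c*s) := by
    rw [show c^2*s^2 = (c*s)^2 by ring]
    simp only [auxF]
    rw [Real.sqrt_sq (mul_nonneg hc.1 hs.1)]
  have heq2 : auxF (s^2) = Real.log 2 - Real.binEntropy (1/2 + s) := by
    simp only [auxF]
    rw [Real.sqrt_sq hs.1]
  rw [heq, heq2] at this
  linarith

lemma binEntropy_half_abs (x : ℝ) :
    Real.binEntropy (1/2 + x) = Real.binEntropy (1/2 + |x|) := by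
  rcases abs_cases x with ⟨h, _⟩ | ⟨h, _⟩
  · rw [h]
  · rw [h, show (1:ℝ)/2 = 2⁻¹ by norm_num, show (2⁻¹ + -x : ℝ) = 2⁻¹ - x by ring,
      Real.binEntropy_two_inv_add]

lemma key2 (s c : ℝ) (hs : |s| ≤ 1/2) (hc : |c| ≤ 1) :
    Real.log 2 - Real.binEntropy (1/2 + c*s) ≤ c^2 * (Real.log 2 - Real.binEntropy (1/2 + s)) := by
  have h1 := binEntropy_half_abs (c*s)
  have h2 := binEntropy_half_abs s
  rw [h1, h2, abs_mul, ← sq_abs c]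
  exact keyIneq |s| ⟨abs_nonneg s, hs⟩ |c| ⟨abs_nonneg c, hc⟩

lemma perterm (lam : ℝ) (hlam : lam ∈ Set.Icc (0:ℝ) 1) (φ : ℝ) :
    binEnt (lam * Real.sin φ ^ 2 + (1 - lam) * Real.cos φ ^ 2) - binEnt lam ≥
      (Real.log 2 - binEnt lam) * Real.sin (2*φ) ^ 2 := by
  obtain ⟨hl0, hl1⟩ := hlam
  have hμ : lam * Real.sin φ^2 + (1-lam)*Real.cos φ^2
      = 1/2 + Real.cos (2*φ) * (1/2 - lam) := by
    have h1 := Real.sin_sq_add_cos_sq φ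
    have h2 := Real.cos_two_mul φ
    nlinarith [h1, h2]
  have hl : binEnt lam = Real.binEntropy (1/2 + (1/2 - lam)) := by
    rw [binEnt_eq_s7, show (1:ℝ)/2 + (1/2 - lam) = 1 - lam by ring, Real.binEntropy_one_sub]
  have hkey := key2 (1/2 - lam) (Real.cos (2*φ))
    (by rw [abs_le]; constructor <;> linarith)
    (by exact Real.abs_cos_le_one _)
  have hsin : Real.sin (2*φ)^2 = 1 - Real.cos (2*φ)^2 := by
    nlinarith [Real.sin_sq_add_cos_sq (2*φ)]
  rw [binEnt_eq_s7, hμ, hl, hsin]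
  nlinarith [hkey]

theorem shannon_state_dependent_bound
    (lam : ℝ) (hlam : lam ∈ Set.Icc (0:ℝ) 1)
    (ε : ℝ) (hε : ε ∈ Set.Icc (0:ℝ) (π/2))
    (θ : ℝ) :
    binEnt (lam * Real.sin θ ^ 2 + (1 - lam) * Real.cos θ ^ 2)
      + binEnt (lam * Real.sin (θ + ε) ^ 2 + (1 - lam) * Real.cos (θ + ε) ^ 2)
      - 2 * binEnt lam ≥
      (Real.log 2 - binEnt lam) * (Real.sin (2*θ + 2*ε) ^ 2 + Real.sin (2*θ) ^ 2) := by
  have h1 := perterm lam hlam θ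
  have h2 := perterm lam hlam (θ + ε)
  have e : Real.sin (2*θ + 2*ε) = Real.sin (2*(θ+ε)) := by ring_nf
  rw [e]
  nlinarith [h1, h2]
end

section
/- Let ε ∈ [0, π/2] and let c = cos ε if ε ≤ π/4 and c = sin ε if ε > π/4. Then for every θ ∈ ℝ, sin²(2θ + 2ε) + sin²(2θ) ≥ 2(1 - c²); moreover the value 2(1 - c²) is attained at θ = π/2 - ε/2 when ε ≤ π/4, and at θ = π/4 - ε/2 when ε > π/4. -/
open Real

theorem sin_sq_sum_min
    (ε : ℝ) (hε : ε ∈ Set.Icc (0:ℝ) (π/2))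
    (c : ℝ) (hc : c = if ε ≤ π/4 then Real.cos ε else Real.sin ε) :
    (∀ θ : ℝ, Real.sin (2*θ + 2*ε) ^ 2 + Real.sin (2*θ) ^ 2 ≥ 2 * (1 - c ^ 2)) ∧
    (ε ≤ π/4 →
      Real.sin (2*(π/2 - ε/2) + 2*ε) ^ 2 + Real.sin (2*(π/2 - ε/2)) ^ 2 = 2 * (1 - c ^ 2)) ∧
    (ε > π/4 →
      Real.sin (2*(π/4 - ε/2) + 2*ε) ^ 2 + Real.sin (2*(π/4 - ε/2)) ^ 2 = 2 * (1 - c ^ 2)) := by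
  obtain ⟨hε0, hε1⟩ := hε
  have hpi := Real.pi_pos
  refine ⟨?_, ?_, ?_⟩
  · intro θ
    have hsin : Real.sin (2*θ + 2*ε)
        = Real.sin (2*θ) * Real.cos (2*ε) + Real.cos (2*θ) * Real.sin (2*ε) :=
      Real.sin_add _ _
    have hs2e : Real.sin (2*ε) = 2 * Real.sin ε * Real.cos ε := Real.sin_two_mul ε
    have hc2e : Real.cos (2*ε) = 2 * Real.cos ε ^ 2 - 1 := Real.cos_two_mul ε
    have hpyth := Real.sin_sq_add_cos_sq (2*θ)
    have hpythe := Real.sin_sq_add_cos_sq ε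
    by_cases h : ε ≤ π/4
    · rw [hc, if_pos h]
      have hC : Real.cos (2*ε) ≥ 0 := by
        apply Real.cos_nonneg_of_mem_Icc
        constructor <;> [linarith; linarith]
      have key := mul_nonneg hC
        (sq_nonneg (Real.sin (2*θ) * Real.cos ε + Real.cos (2*θ) * Real.sin ε))
      have hid : Real.sin (2*θ + 2*ε) ^ 2 + Real.sin (2*θ) ^ 2 - 2 * (1 - Real.cos ε ^ 2)
          = 2 * Real.cos (2*ε) *
            (Real.sin (2*θ) * Real.cos ε + Real.cos (2*θ) * Real.sin ε) ^ 2 := by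
        rw [hsin, hs2e, hc2e]
        linear_combination (2 - 2 * Real.cos ε ^ 2) * hpyth +
          (2 * Real.cos (2*θ) ^ 2) * hpythe
      linarith [hid, key]
    · rw [hc, if_neg h]
      push_neg at h
      have hC : Real.cos (2*ε) ≤ 0 := by
        apply Real.cos_nonpos_of_pi_div_two_le_of_le <;> linarith
      have key := mul_nonneg (neg_nonneg.mpr hC)
        (sq_nonneg (Real.sin (2*θ) * Real.sin ε - Real.cos (2*θ) * Real.cos ε))
      have hid : Real.sin (2*θ + 2*ε) ^ 2 + Real.sin (2*θ) ^ 2 - 2 * (1 - Real.sin ε ^ 2)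
          = -2 * Real.cos (2*ε) *
            (Real.sin (2*θ) * Real.sin ε - Real.cos (2*θ) * Real.cos ε) ^ 2 := by
        rw [hsin, hs2e, hc2e]
        linear_combination (2 * Real.cos ε ^ 2) * hpyth +
          (2 * Real.sin (2*θ) ^ 2 * (2 * Real.cos ε ^ 2 - 1)
            + 4 * Real.cos (2*θ) ^ 2 * Real.cos ε ^ 2 + 2) * hpythe
      linarith [hid, key]
  · intro h
    rw [hc, if_pos h]
    have e0 : 2*(π/2 - ε/2) + 2*ε = π + ε := by ring
    have e0' : 2*(π/2 - ε/2) = π - ε := by ring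
    have e1 : Real.sin (π + ε) = -Real.sin ε := by rw [Real.sin_add]; simp
    have e2 : Real.sin (π - ε) = Real.sin ε := Real.sin_pi_sub ε
    rw [e0, e0', e1, e2]
    nlinarith [Real.sin_sq_add_cos_sq ε]
  · intro h
    rw [hc, if_neg (not_le.mpr h)]
    have e0 : 2*(π/4 - ε/2) + 2*ε = π/2 + ε := by ring
    have e0' : 2*(π/4 - ε/2) = π/2 - ε := by ring
    have e1 : Real.sin (π/2 + ε) = Real.cos ε := by rw [Real.sin_add]; simp
    have e2 : Real.sin (π/2 - ε) = Real.cos ε := Real.sin_pi_div_two_sub ε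
    rw [e0, e0', e1, e2]
    nlinarith [Real.sin_sq_add_cos_sq ε]
end

section
/- Let λ ∈ [0,1] and θ ∈ ℝ. Let ψ = (√λ, 0, 0, √(1-λ)) ∈ ℝ⁴ and ρ_AB = ψψᵀ (the 4×4 rank-one projection onto ψ). For i ∈ {0,1} let P_i = (O(θ) E_{ii} O(θ)ᵀ) ⊗ I₂, where O(θ) is the 2×2 rotation matrix with rows (cos θ, -sin θ) and (sin θ, cos θ), E_{ii} is the 2×2 matrix unit, and I₂ the 2×2 identity. Let ρ_XB = P₀ ρ_AB P₀ + P₁ ρ_AB P₁. Then the characteristic polynomial of ρ_XB is X² (X - μ₁)(X - μ₂), where μ₁ = λ sin²θ + (1-λ)cos²θ and μ₂ = λ cos²θ + (1-λ)sin²θ; in particular the nonzero eigenvalues of ρ_XB are μ₁ and μ₂. -/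
open Real Matrix Kronecker Polynomial

/-- 2×2 planar rotation matrix. -/
noncomputable def rot (θ : ℝ) : Matrix (Fin 2) (Fin 2) ℝ :=
  !![Real.cos θ, -Real.sin θ; Real.sin θ, Real.cos θ]

/-- The vector `ψ = (√λ, 0, 0, √(1-λ)) ∈ ℝ⁴`, indexed by `Fin 2 × Fin 2`. -/
noncomputable def psi (lam : ℝ) : Fin 2 × Fin 2 → ℝ :=
  fun p => if p = (0, 0) then Real.sqrt lam else if p = (1, 1) then Real.sqrt (1 - lam) else 0

/-- The measurement projector `P_i = (O(θ) E_{ii} O(θ)ᵀ) ⊗ I₂`. -/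
noncomputable def P (θ : ℝ) (i : Fin 2) : Matrix (Fin 2 × Fin 2) (Fin 2 × Fin 2) ℝ :=
  (rot θ * Matrix.single i i (1:ℝ) * (rot θ)ᵀ) ⊗ₖ (1 : Matrix (Fin 2) (Fin 2) ℝ)

lemma mul_vecMulVec_mul {n : Type*} [Fintype n] [DecidableEq n]
    (A B : Matrix n n ℝ) (u v : n → ℝ) :
    A * Matrix.vecMulVec u v * B = Matrix.vecMulVec (A *ᵥ u) (v ᵥ* B) := by
  ext i j
  simp only [Matrix.mul_apply, Matrix.vecMulVec_apply, Matrix.mulVec, Matrix.vecMul,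
    dotProduct]
  rw [Finset.sum_mul_sum]
  conv_rhs => rw [Finset.sum_comm]
  refine Finset.sum_congr rfl fun l _ => ?_
  rw [Finset.sum_mul]
  refine Finset.sum_congr rfl fun k _ => ?_
  ring

lemma P_zero_eq (θ : ℝ) : P θ 0 =
    (!![Real.cos θ^2, Real.cos θ*Real.sin θ; Real.cos θ*Real.sin θ, Real.sin θ^2])
      ⊗ₖ (1 : Matrix (Fin 2) (Fin 2) ℝ) := by
  have h : Matrix.single (0:Fin 2) 0 (1:ℝ) = !![1,0;0,0] := by
    ext i j; fin_cases i <;> fin_cases j <;> simp [Matrix.single]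
  have h2 : rot θ * Matrix.single 0 0 (1:ℝ) * (rot θ)ᵀ
      = !![Real.cos θ^2, Real.cos θ*Real.sin θ; Real.cos θ*Real.sin θ, Real.sin θ^2] := by
    rw [h]; ext i j
    fin_cases i <;> fin_cases j <;>
      simp [rot, Matrix.mul_apply, Fin.sum_univ_two, Matrix.transpose_apply, Matrix.vecHead,
        Matrix.vecTail] <;> ring
  rw [P, h2]

lemma P_one_eq (θ : ℝ) : P θ 1 =
    (!![Real.sin θ^2, -(Real.cos θ*Real.sin θ); -(Real.cos θ*Real.sin θ), Real.cos θ^2])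
      ⊗ₖ (1 : Matrix (Fin 2) (Fin 2) ℝ) := by
  have h : Matrix.single (1:Fin 2) 1 (1:ℝ) = !![0,0;0,1] := by
    ext i j; fin_cases i <;> fin_cases j <;> simp [Matrix.single]
  have h2 : rot θ * Matrix.single 1 1 (1:ℝ) * (rot θ)ᵀ
      = !![Real.sin θ^2, -(Real.cos θ*Real.sin θ); -(Real.cos θ*Real.sin θ), Real.cos θ^2] := by
    rw [h]; ext i j
    fin_cases i <;> fin_cases j <;>
      simp [rot, Matrix.mul_apply, Fin.sum_univ_two, Matrix.transpose_apply, Matrix.vecHead,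
        Matrix.vecTail] <;> ring
  rw [P, h2]

set_option maxHeartbeats 2000000 in
theorem charpoly_post_measurement_state
    (lam : ℝ) (hlam : lam ∈ Set.Icc (0:ℝ) 1) (θ : ℝ) :
    (let ρAB := Matrix.vecMulVec (psi lam) (psi lam);
     let ρXB := P θ 0 * ρAB * P θ 0 + P θ 1 * ρAB * P θ 1;
     ρXB.charpoly) =
      X ^ 2 * (X - C (lam * Real.sin θ ^ 2 + (1 - lam) * Real.cos θ ^ 2))
            * (X - C (lam * Real.cos θ ^ 2 + (1 - lam) * Real.sin θ ^ 2)) := by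
  obtain ⟨h0, h1⟩ := hlam
  set a := Real.sqrt lam with ha
  set b := Real.sqrt (1 - lam) with hb
  set c := Real.cos θ with hc
  set s := Real.sin θ with hs
  have ha2 : a ^ 2 = lam := Real.sq_sqrt h0
  have hb2 : b ^ 2 = 1 - lam := Real.sq_sqrt (by linarith)
  have hcs : c ^ 2 + s ^ 2 = 1 := by rw [hc, hs]; exact Real.cos_sq_add_sin_sq θ
  -- the post-measurement vectors
  set x : Fin 2 × Fin 2 → ℝ := fun p => ![![a*c^2, b*c*s], ![a*c*s, b*s^2]] p.1 p.2 with hxdef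
  set y : Fin 2 × Fin 2 → ℝ :=
    fun p => ![![a*s^2, -(b*c*s)], ![-(a*c*s), b*c^2]] p.1 p.2 with hydef
  have hx1 : P θ 0 *ᵥ psi lam = x := by
    rw [P_zero_eq]
    ext p
    obtain ⟨i, k⟩ := p
    fin_cases i <;> fin_cases k <;>
      simp [Matrix.mulVec, dotProduct, Fintype.sum_prod_type, Fin.sum_univ_two,
        Matrix.kroneckerMap_apply, psi, Matrix.one_apply, hxdef, ← ha, ← hb, ← hc, ← hs] <;> ring
  have hx2 : psi lam ᵥ* P θ 0 = x := by
    rw [P_zero_eq]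
    ext p
    obtain ⟨i, k⟩ := p
    fin_cases i <;> fin_cases k <;>
      simp [Matrix.vecMul, dotProduct, Fintype.sum_prod_type, Fin.sum_univ_two,
        Matrix.kroneckerMap_apply, psi, Matrix.one_apply, hxdef, ← ha, ← hb, ← hc, ← hs] <;> ring
  have hy1 : P θ 1 *ᵥ psi lam = y := by
    rw [P_one_eq]
    ext p
    obtain ⟨i, k⟩ := p
    fin_cases i <;> fin_cases k <;>
      simp [Matrix.mulVec, dotProduct, Fintype.sum_prod_type, Fin.sum_univ_two,
        Matrix.kroneckerMap_apply, psi, Matrix.one_apply, hydef, ← ha, ← hb, ← hc, ← hs] <;> ring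
  have hy2 : psi lam ᵥ* P θ 1 = y := by
    rw [P_one_eq]
    ext p
    obtain ⟨i, k⟩ := p
    fin_cases i <;> fin_cases k <;>
      simp [Matrix.vecMul, dotProduct, Fintype.sum_prod_type, Fin.sum_univ_two,
        Matrix.kroneckerMap_apply, psi, Matrix.one_apply, hydef, ← ha, ← hb, ← hc, ← hs] <;> ring
  show (P θ 0 * Matrix.vecMulVec (psi lam) (psi lam) * P θ 0
      + P θ 1 * Matrix.vecMulVec (psi lam) (psi lam) * P θ 1).charpoly = _
  rw [mul_vecMulVec_mul, mul_vecMulVec_mul, hx1, hx2, hy1, hy2]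
  rw [← Matrix.charpoly_reindex finProdFinEquiv]
  have hE : Matrix.reindex finProdFinEquiv finProdFinEquiv
      (Matrix.vecMulVec x x + Matrix.vecMulVec y y) =
      !![a*c^2*(a*c^2) + a*s^2*(a*s^2), a*c^2*(b*c*s) + a*s^2*(-(b*c*s)),
         a*c^2*(a*c*s) + a*s^2*(-(a*c*s)), a*c^2*(b*s^2) + a*s^2*(b*c^2);
         b*c*s*(a*c^2) + -(b*c*s)*(a*s^2), b*c*s*(b*c*s) + -(b*c*s)*(-(b*c*s)),
         b*c*s*(a*c*s) + -(b*c*s)*(-(a*c*s)), b*c*s*(b*s^2) + -(b*c*s)*(b*c^2);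
         a*c*s*(a*c^2) + -(a*c*s)*(a*s^2), a*c*s*(b*c*s) + -(a*c*s)*(-(b*c*s)),
         a*c*s*(a*c*s) + -(a*c*s)*(-(a*c*s)), a*c*s*(b*s^2) + -(a*c*s)*(b*c^2);
         b*s^2*(a*c^2) + b*c^2*(a*s^2), b*s^2*(b*c*s) + b*c^2*(-(b*c*s)),
         b*s^2*(a*c*s) + b*c^2*(-(a*c*s)), b*s^2*(b*s^2) + b*c^2*(b*c^2)] := by
    have e0 : finProdFinEquiv.symm (0 : Fin 4) = ((0 : Fin 2), (0 : Fin 2)) := rfl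
    have e1 : finProdFinEquiv.symm (1 : Fin 4) = ((0 : Fin 2), (1 : Fin 2)) := rfl
    have e2 : finProdFinEquiv.symm (2 : Fin 4) = ((1 : Fin 2), (0 : Fin 2)) := rfl
    have e3 : finProdFinEquiv.symm (3 : Fin 4) = ((1 : Fin 2), (1 : Fin 2)) := rfl
    ext i j
    fin_cases i <;> fin_cases j <;>
      simp [Matrix.vecMulVec_apply, hxdef, hydef, e0, e1, e2, e3]
  rw [hE, Matrix.charpoly]
  simp only [Matrix.charmatrix_apply, Matrix.diagonal_apply, Matrix.det_succ_row_zero,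
    Fin.sum_univ_succ, Matrix.submatrix_apply, Fin.succAbove, Matrix.cons_val', Matrix.cons_val_zero,
    Matrix.cons_val_one, Matrix.head_cons, Matrix.head_fin_const, Matrix.cons_val_fin_one,
    Matrix.empty_val', Matrix.cons_val_succ, Fin.val_zero, Fin.val_succ,
    Matrix.det_fin_zero, Finset.univ_unique, Finset.sum_const, Fin.isValue]
  norm_num [Fin.lt_def, Fin.castSucc, Fin.castAdd, Fin.castLE, Fin.succ]
  norm_num
  have hA2C : (C a : Polynomial ℝ) ^ 2 = C lam := by rw [← map_pow, ha2]
  have hB2C : (C b : Polynomial ℝ) ^ 2 = 1 - C lam := by rw [← map_pow, hb2, map_sub, _root_.map_one]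
  have hS2C : (C s : Polynomial ℝ) ^ 2 = 1 - C c ^ 2 := by
    have h' : s ^ 2 = 1 - c ^ 2 := by linarith
    rw [← map_pow, h', map_sub, _root_.map_one, map_pow]
  linear_combination (-((C s ^ 4) * (X ^ 3)) - (2 * (C c ^ 2) * (C s ^ 2) * (X ^ 3)) + ((C c ^ 2) * (C s ^ 4) * (X ^ 2) * (C lam)) - ((C c ^ 4) * (X ^ 3)) + ((C c ^ 4) * (C s ^ 2) * (X ^ 2) * (C lam)) + ((C c ^ 6) * (X ^ 2) * (C lam)) - ((C c ^ 6) * (C s ^ 2) * (X ^ 2) * (C lam)) - ((C c ^ 8) * (X ^ 2) * (C lam)) + ((C b ^ 2) * (C s ^ 8) * (X ^ 2)) + (2 * (C b ^ 2) * (C c ^ 2) * (C s ^ 6) * (X ^ 2)) + (2 * (C b ^ 2) * (C c ^ 4) * (C s ^ 4) * (X ^ 2)) + (2 * (C b ^ 2) * (C c ^ 6) * (C s ^ 2) * (X ^ 2)) + ((C b ^ 2) * (C c ^ 8) * (X ^ 2)) + ((C a ^ 2) * (C c ^ 2) * (C s ^ 6) * (X ^ 2)) + (2 * (C a ^ 2)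 * (C c ^ 4) * (C s ^ 4) * (X ^ 2)) + ((C a ^ 2) * (C c ^ 6) * (C s ^ 2) * (X ^ 2))) * hA2C + (-((C s ^ 4) * (X ^ 3)) + ((C s ^ 8) * (X ^ 2) * (C lam)) - (2 * (C c ^ 2) * (C s ^ 2) * (X ^ 3)) + ((C c ^ 2) * (C s ^ 4) * (X ^ 2)) + ((C c ^ 2) * (C s ^ 6) * (X ^ 2) * (C lam)) - ((C c ^ 4) * (X ^ 3)) + ((C c ^ 4) * (C s ^ 2) * (X ^ 2)) + ((C c ^ 6) * (X ^ 2)) - ((C c ^ 6) * (C s ^ 2) * (X ^ 2)) + ((C c ^ 6) * (C s ^ 2) * (X ^ 2) * (C lam)) - ((C c ^ 8) * (X ^ 2)) + ((C c ^ 8) * (X ^ 2) * (C lam)) + ((C b ^ 2) * (C c ^ 2) * (C s ^ 6) * (X ^ 2)) + (2 * (C b ^ 2) * (C c ^ 4) * (C s ^ 4) * (X ^ 2)) + ((C b ^ 2) * (C c ^ 6) * (C s ^ 2) * (X ^ 2))) * hB2C + (-((C s ^ 2) * (X ^ 3)) + ((C s ^ 4) * (X ^ 2) * (C lam)) - ((C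 s ^ 4) * (X ^ 2) * (C lam ^ 2)) + ((C s ^ 6) * (X ^ 2) * (C lam)) - ((C s ^ 6) * (X ^ 2) * (C lam ^ 2)) - ((C c ^ 2) * (X ^ 3)) + ((C c ^ 2) * (C s ^ 2) * (X ^ 2)) - (2 * (C c ^ 2) * (C s ^ 2) * (X ^ 2) * (C lam)) + (2 * (C c ^ 2) * (C s ^ 2) * (X ^ 2) * (C lam ^ 2)) + ((C c ^ 4) * (X ^ 2) * (C lam)) - ((C c ^ 4) * (X ^ 2) * (C lam ^ 2)) - ((C c ^ 6) * (X ^ 2)) + (2 * (C c ^ 6) * (X ^ 2) * (C lam)) - (2 * (C c ^ 6) * (X ^ 2) * (C lam ^ 2)) + ((C b ^ 2) * (C c ^ 2) * (C s ^ 4) * (X ^ 2)) + ((C b ^ 2) * (C c ^ 4) * (C s ^ 2) * (X ^ 2)) + ((C b ^ 2) * (C c ^ 6) * (X ^ 2)) + ((C a ^ 2) * (C c ^ 2) * (C s ^ 4) * (X ^ 2) * (C lam)) + ((C a ^ 2) * (C c ^ 4) * (C s ^ 2) * (X ^ 2) * (C lam)) + ((C a ^ 2) * (C c ^ 6) * (X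 ^ 2) * (C lam))) * hS2C
end

section
/- Let α ∈ (0,1). Then the limit as q → 1 (q ≠ 1) of ((α^q + (1-α)^q - 2^{1-q})/(α^q + (1-α)^q + q - 2)) · (1 - t_q(α)) exists and equals ln 2 - h(α), where h(α) = -α ln α - (1-α) ln(1-α). (Hence the main Tsallis uncertainty bound converges as q → 1 to the Shannon bound 2(ln 2 - h(λ))(1 - c²).) -/
open Real

theorem bound_coefficient_limit_q_to_one
    (α : ℝ) (hα : α ∈ Set.Ioo (0:ℝ) 1) :
    Filter.Tendsto
      (fun q : ℝ =>
        ((α ^ q + (1 - α) ^ q - 2 ^ (1 - q)) / (α ^ q + (1 - α) ^ q + q - 2))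
          * (1 - tq q α))
      (nhdsWithin 1 {(1:ℝ)}ᶜ)
      (nhds (Real.log 2 - binEnt α)) := by
  obtain ⟨h0, h1⟩ := hα
  have h0' : (0:ℝ) < 1 - α := by linarith
  set F : ℝ → ℝ := fun q => α ^ q + (1 - α) ^ q with hFdef
  set G : ℝ → ℝ := fun q => (2:ℝ) ^ (1 - q) with hGdef
  have hF1 : F 1 = 1 := by simp [hFdef, Real.rpow_one]
  have hG1 : G 1 = 1 := by simp [hGdef]
  have hFd : HasDerivAt F (-(binEnt α)) 1 := by
    have hA := (Real.hasStrictDerivAt_const_rpow h0 1).hasDerivAt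
    have hB := (Real.hasStrictDerivAt_const_rpow h0' 1).hasDerivAt
    have := hA.add hB
    simpa [binEnt, Real.rpow_one, hFdef, Pi.add_def] using this.congr_deriv (by simp [Real.rpow_one]; ring)
  have hGd : HasDerivAt G (-(Real.log 2)) 1 := by
    have h2 : (0:ℝ) < 2 := by norm_num
    have hc := (Real.hasStrictDerivAt_const_rpow h2 (1 - 1)).hasDerivAt
    have hcomp := hc.comp 1 (((hasDerivAt_id (1:ℝ)).const_sub 1))
    simpa [hGdef, Function.comp_def] using hcomp.congr_deriv (by norm_num)
  -- slopes
  have hsF : Filter.Tendsto (slope F 1) (nhdsWithin 1 {(1:ℝ)}ᶜ) (nhds (-(binEnt α))) :=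
    hasDerivAt_iff_tendsto_slope.mp hFd
  have hsG : Filter.Tendsto (slope G 1) (nhdsWithin 1 {(1:ℝ)}ᶜ) (nhds (-(Real.log 2))) :=
    hasDerivAt_iff_tendsto_slope.mp hGd
  have hEnt : binEnt α < 1 := by
    have l1 : Real.log α⁻¹ < α⁻¹ - 1 :=
      Real.log_lt_sub_one_of_pos (inv_pos.mpr h0) (by
        intro h; apply absurd (inv_eq_one.mp h); linarith)
    have l2 : Real.log (1 - α)⁻¹ < (1 - α)⁻¹ - 1 :=
      Real.log_lt_sub_one_of_pos (inv_pos.mpr h0') (by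
        intro h; apply absurd (inv_eq_one.mp h); linarith)
    rw [Real.log_inv] at l1 l2
    have m1 : α * (-Real.log α) < α * (α⁻¹ - 1) := mul_lt_mul_of_pos_left l1 h0
    have m2 : (1 - α) * (-Real.log (1 - α)) < (1 - α) * ((1 - α)⁻¹ - 1) :=
      mul_lt_mul_of_pos_left l2 h0'
    have e1 : α * α⁻¹ = 1 := mul_inv_cancel₀ h0.ne'
    have e2 : (1 - α) * (1 - α)⁻¹ = 1 := mul_inv_cancel₀ h0'.ne'
    unfold binEnt
    nlinarith [m1, m2, e1, e2]
  have hne : -(binEnt α) + 1 ≠ 0 := by linarith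
  have hs1 : Filter.Tendsto (fun q => slope F 1 q + 1) (nhdsWithin 1 {(1:ℝ)}ᶜ)
      (nhds (-(binEnt α) + 1)) := hsF.add tendsto_const_nhds
  have hev : ∀ᶠ q in nhdsWithin 1 {(1:ℝ)}ᶜ, slope F 1 q + 1 ≠ 0 :=
    hs1.eventually_ne hne
  have hmem : ∀ᶠ q in nhdsWithin 1 {(1:ℝ)}ᶜ, q ≠ 1 :=
    eventually_mem_nhdsWithin.mono (fun q hq => hq)
  have heq : ∀ᶠ q in nhdsWithin 1 {(1:ℝ)}ᶜ,
      slope F 1 q - slope G 1 q =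
        ((α ^ q + (1 - α) ^ q - 2 ^ (1 - q)) / (α ^ q + (1 - α) ^ q + q - 2))
          * (1 - tq q α) := by
    filter_upwards [hev, hmem] with q hq hq1
    have hd : q - 1 ≠ 0 := sub_ne_zero.mpr hq1
    have hB : F q + q - 2 ≠ 0 := by
      intro hB0
      apply hq
      rw [slope_def_field, hF1]
      field_simp
      linarith
    rw [slope_def_field, slope_def_field, hF1, hG1]
    unfold tq
    show (F q - 1) / (q - 1) - (G q - 1) / (q - 1) =
        (α ^ q + (1 - α) ^ q - 2 ^ (1 - q)) / (α ^ q + (1 - α) ^ q + q - 2)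
          * (1 - (1 - α ^ q - (1 - α) ^ q) / (q - 1))
    have hFq : F q = α ^ q + (1 - α) ^ q := rfl
    have hGq : G q = (2:ℝ) ^ (1 - q) := rfl
    have hB' : α ^ q + (1 - α) ^ q + q - 2 ≠ 0 := by rw [← hFq]; exact hB
    rw [hFq, hGq]
    field_simp
    ring
  have : Filter.Tendsto (fun q => slope F 1 q - slope G 1 q) (nhdsWithin 1 {(1:ℝ)}ᶜ)
      (nhds (Real.log 2 - binEnt α)) := by
    have := hsF.sub hsG
    simpa [sub_eq_add_neg, add_comm] using this
  exact this.congr' heq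
end
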